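/- arXiv:1203.2942 — 12 statements merged into one kernel-verified Lean document; each statement's English description precedes it below -/
import Mathlib

section
/- Let u ∈ C^2([a,b]) satisfy -u'' = λ - κ cos(α) u + κ sin(α)(x - b) on (a,b) with u(a) = u(b) = 0, ∫_a^b u dx = V₀ > 0, κ > 0, α ∈ (0, π/2), and u'(a) ≥ 0. Then u(x) > 0 for all x ∈ (a,b). -/
open MeasureTheory Real Set

/-- Positivity of the drop profile when the rear slope is nonnegative. -/
theorem stmt_0 (a b lam κ α V₀ : ℝ) (u u' u'' : ℝ → ℝ)
    (hab : a < b) (hκ : 0 < κ) (hα : α ∈ Set.Ioo 0 (Real.pi / 2)) (hV : 0 < V₀)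
    (hu' : ∀ x ∈ Set.Icc a b, HasDerivWithinAt u (u' x) (Set.Icc a b) x)
    (hu'' : ∀ x ∈ Set.Icc a b, HasDerivWithinAt u' (u'' x) (Set.Icc a b) x)
    (hu''c : ContinuousOn u'' (Set.Icc a b))
    (hode : ∀ x ∈ Set.Ioo a b,
      -u'' x = lam - κ * Real.cos α * u x + κ * Real.sin α * (x - b))
    (ha0 : u a = 0) (hb0 : u b = 0)
    (hvol : ∫ x in a..b, u x = V₀)
    (ha' : 0 ≤ u' a) :
    ∀ x ∈ Set.Ioo a b, 0 < u x := by
  by_contra h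
  push_neg at h
  obtain ⟨x₀, hx₀, hx₀le⟩ := h
  have hsin : 0 < Real.sin α := Real.sin_pos_of_pos_of_lt_pi hα.1
    (lt_trans hα.2 (by linarith [Real.pi_pos]))
  have hcos : 0 < Real.cos α := Real.cos_pos_of_mem_Ioo
    ⟨by linarith [Real.pi_pos, hα.1], hα.2⟩
  have hc : 0 < κ * Real.cos α := mul_pos hκ hcos
  have hs : 0 < κ * Real.sin α := mul_pos hκ hsin
  have hu_cont : ContinuousOn u (Set.Icc a b) := fun x hx => (hu' x hx).continuousWithinAt
  have hu'_cont : ContinuousOn u' (Set.Icc a b) := fun x hx => (hu'' x hx).continuousWithinAt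
  -- derivatives at interior points
  have hu'at : ∀ x ∈ Set.Ioo a b, HasDerivAt u (u' x) x := by
    intro x hx
    exact (hu' x (Set.Ioo_subset_Icc_self hx)).hasDerivAt (Icc_mem_nhds hx.1 hx.2)
  have hu''at : ∀ x ∈ Set.Ioo a b, HasDerivAt u' (u'' x) x := by
    intro x hx
    exact (hu'' x (Set.Ioo_subset_Icc_self hx)).hasDerivAt (Icc_mem_nhds hx.1 hx.2)
  have hodeIoo : ∀ x ∈ Set.Ioo a b,
      u'' x = κ * Real.cos α * u x - (lam + κ * Real.sin α * (x - b)) := by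
    intro x hx
    have := hode x hx
    linarith
  -- obtain an interior global minimum with nonpositive value
  obtain ⟨μ₀, hμ₀mem, hμ₀min⟩ :=
    isCompact_Icc.exists_isMinOn (Set.nonempty_Icc.2 hab.le) hu_cont
  have hx₀Icc : x₀ ∈ Set.Icc a b := Set.Ioo_subset_Icc_self hx₀
  obtain ⟨μ, hμIoo, hμmin, hμle⟩ :
      ∃ μ ∈ Set.Ioo a b, (∀ y ∈ Set.Icc a b, u μ ≤ u y) ∧ u μ ≤ 0 := by
    by_cases hcase : u μ₀ < u x₀
    · refine ⟨μ₀, ?_, fun y hy => hμ₀min hy, ?_⟩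
      · have hμ₀le : u μ₀ < 0 := lt_of_lt_of_le hcase hx₀le
        rcases hμ₀mem with ⟨h1, h2⟩
        constructor
        · rcases lt_or_eq_of_le h1 with h | h
          · exact h
          · exfalso; rw [← h, ha0] at hμ₀le; linarith
        · rcases lt_or_eq_of_le h2 with h | h
          · exact h
          · exfalso; rw [h, hb0] at hμ₀le; linarith
      · linarith [lt_of_lt_of_le hcase hx₀le]
    · push_neg at hcase
      exact ⟨x₀, hx₀, fun y hy => le_trans hcase (hμ₀min hy), hx₀le⟩
  have hμIcc : μ ∈ Set.Icc a b := Set.Ioo_subset_Icc_self hμIoo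
  -- u' μ = 0
  have hloc : IsLocalMin u μ := by
    have : Set.Icc a b ∈ nhds μ := Icc_mem_nhds hμIoo.1 hμIoo.2
    exact Filter.eventually_iff_exists_mem.2 ⟨Set.Icc a b, this, fun y hy => hμmin y hy⟩
  have hd0 : u' μ = 0 := hloc.hasDerivAt_eq_zero (hu'at μ hμIoo)
  -- key inequality: lam + κ sin α (μ - b) ≤ κ cos α * u μ
  have hfμ : lam + κ * Real.sin α * (μ - b) ≤ κ * Real.cos α * u μ := by
    by_contra hlt
    push_neg at hlt
    have hμ'' : u'' μ < 0 := by
      have := hodeIoo μ hμIoo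
      linarith
    -- slope of u' tends to u'' μ < 0 from the right
    have hslope : Filter.Tendsto (slope u' μ) (nhdsWithin μ (Set.Ioi μ)) (nhds (u'' μ)) :=
      ((hasDerivAt_iff_tendsto_slope.mp (hu''at μ hμIoo))).mono_left
        (nhdsWithin_mono μ (fun x hx => ne_of_gt hx))
    have hev1 : ∀ᶠ x in nhdsWithin μ (Set.Ioi μ), slope u' μ x < 0 :=
      hslope.eventually_lt_const hμ''
    have hev2 : ∀ᶠ x in nhdsWithin μ (Set.Ioi μ), x ∈ Set.Ioo a b :=
      Filter.eventually_iff_exists_mem.2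
        ⟨Set.Ioo a b, mem_nhdsWithin_of_mem_nhds (isOpen_Ioo.mem_nhds hμIoo),
          fun x hx => hx⟩
    obtain ⟨d, hd, hsub⟩ := mem_nhdsGT_iff_exists_Ioc_subset.mp (hev1.and hev2)
    have hdμ : μ < d := hd
    have hdmem : d ∈ Set.Ioo a b := (hsub (Set.right_mem_Ioc.2 hdμ)).2
    have hIccsub : Set.Icc μ d ⊆ Set.Icc a b :=
      Set.Icc_subset_Icc hμIcc.1 hdmem.2.le
    have hu'neg : ∀ x ∈ Set.Ioc μ d, u' x < 0 := by
      intro x hx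
      have h1 := (hsub hx).1
      rw [slope_def_field] at h1
      have hxμ : 0 < x - μ := sub_pos.2 hx.1
      rw [div_neg_iff] at h1
      rcases h1 with ⟨h, _⟩ | ⟨h, hneg⟩
      · linarith
      · linarith
    have hanti : StrictAntiOn u (Set.Icc μ d) := by
      apply strictAntiOn_of_deriv_neg (convex_Icc μ d) (hu_cont.mono hIccsub)
      intro x hx
      rw [interior_Icc] at hx
      have hxI : x ∈ Set.Ioo a b := ⟨lt_trans hμIoo.1 hx.1, lt_trans hx.2 hdmem.2⟩
      rw [(hu'at x hxI).deriv]
      exact hu'neg x ⟨hx.1, hx.2.le⟩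
    have := hanti (Set.left_mem_Icc.2 hdμ.le) (Set.right_mem_Icc.2 hdμ.le) hdμ
    have := hμmin d (Set.Ioo_subset_Icc_self hdmem)
    linarith
  -- u' is strictly increasing on [a, μ]
  have hIccaμ : Set.Icc a μ ⊆ Set.Icc a b := Set.Icc_subset_Icc le_rfl hμIcc.2
  have hmono' : StrictMonoOn u' (Set.Icc a μ) := by
    apply strictMonoOn_of_deriv_pos (convex_Icc a μ) (hu'_cont.mono hIccaμ)
    intro x hx
    rw [interior_Icc] at hx
    have hxI : x ∈ Set.Ioo a b := ⟨hx.1, lt_trans hx.2 hμIoo.2⟩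
    rw [(hu''at x hxI).deriv, hodeIoo x hxI]
    have h1 : κ * Real.cos α * u μ ≤ κ * Real.cos α * u x :=
      mul_le_mul_of_nonneg_left (hμmin x (Set.Ioo_subset_Icc_self hxI)) hc.le
    have h2 : κ * Real.sin α * (x - b) < κ * Real.sin α * (μ - b) :=
      mul_lt_mul_of_pos_left (by linarith [hx.2]) hs
    linarith
  -- hence u' > 0 on (a, μ), so u is strictly increasing on [a, μ]
  have hmono : StrictMonoOn u (Set.Icc a μ) := by
    apply strictMonoOn_of_deriv_pos (convex_Icc a μ) (hu_cont.mono hIccaμ)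
    intro x hx
    rw [interior_Icc] at hx
    have hxI : x ∈ Set.Ioo a b := ⟨hx.1, lt_trans hx.2 hμIoo.2⟩
    rw [(hu'at x hxI).deriv]
    have := hmono' (Set.left_mem_Icc.2 (le_of_lt (lt_trans hx.1 hx.2)))
      ⟨hx.1.le, hx.2.le⟩ hx.1
    linarith
  have := hmono (Set.left_mem_Icc.2 hμIoo.1.le) (Set.right_mem_Icc.2 hμIoo.1.le) hμIoo.1
  rw [ha0] at this
  linarith
end

section
/- Let u ∈ C^2([a,b]) satisfy -u'' = λ - κ cos(α) u + κ sin(α)(x - b) on (a,b) with u(a) = u(b) = 0, ∫_a^b u dx = V₀ > 0, κ > 0, α ∈ (0, π/2). Then u'(b) < 0 (the drop meets the ground with strictly negative slope at the front endpoint). -/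
open MeasureTheory Real Set Filter Topology

/-- Minimum principle: if `w'' < 0` wherever `w < 0` on `(p,q)`, and `w` is
nonnegative at the endpoints, then `w ≥ 0` on `[p,q]`. -/
lemma minprin (p q : ℝ) (w w' w'' : ℝ → ℝ) (hpq : p < q)
    (hwc : ContinuousOn w (Set.Icc p q))
    (hw' : ∀ x ∈ Set.Ioo p q, HasDerivAt w (w' x) x)
    (hw'' : ∀ x ∈ Set.Ioo p q, HasDerivAt w' (w'' x) x)
    (hp : 0 ≤ w p) (hq : 0 ≤ w q)
    (hkey : ∀ x ∈ Set.Ioo p q, w x < 0 → w'' x < 0) :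
    ∀ x ∈ Set.Icc p q, 0 ≤ w x := by
  by_contra hcon
  push_neg at hcon
  obtain ⟨x₀, hx₀, hx₀neg⟩ := hcon
  obtain ⟨m, hmIcc, hmin⟩ := isCompact_Icc.exists_isMinOn ⟨x₀, hx₀⟩ hwc
  have hmneg : w m < 0 := lt_of_le_of_lt (hmin hx₀) hx₀neg
  have hmo : m ∈ Set.Ioo p q := by
    constructor
    · rcases eq_or_lt_of_le hmIcc.1 with h | h
      · exfalso; rw [h] at hp; linarith
      · exact h
    · rcases eq_or_lt_of_le hmIcc.2 with h | h
      · exfalso; rw [h] at hmneg; linarith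
      · exact h
  have hloc : IsLocalMin w m := hmin.isLocalMin (Icc_mem_nhds hmo.1 hmo.2)
  have hd0 : w' m = 0 := hloc.hasDerivAt_eq_zero (hw' m hmo)
  have hk : w'' m < 0 := hkey m hmo hmneg
  have hslope : Filter.Tendsto (slope w' m) (𝓝[≠] m) (𝓝 (w'' m)) :=
    hasDerivAt_iff_tendsto_slope.mp (hw'' m hmo)
  have hmono : 𝓝[>] m ≤ 𝓝[≠] m :=
    nhdsWithin_mono m (fun x hx => ne_of_gt hx)
  have hev : ∀ᶠ x in 𝓝[>] m, slope w' m x < 0 :=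
    (hslope.mono_left hmono).eventually (gt_mem_nhds hk)
  have hev2 : ∀ᶠ x in 𝓝[>] m, w' x < 0 := by
    filter_upwards [hev, self_mem_nhdsWithin] with x hx hx'
    have hxm : (0:ℝ) < x - m := sub_pos.mpr hx'
    rw [slope_def_field] at hx
    have h2 : w' x - w' m < 0 := by
      have h3 := mul_neg_of_neg_of_pos hx hxm
      rwa [div_mul_cancel₀ _ (ne_of_gt hxm)] at h3
    linarith [hd0]
  have hev3 : ∀ᶠ x in 𝓝[>] m, x ∈ Set.Ioo m q :=
    Ioo_mem_nhdsGT_of_mem ⟨le_refl m, hmo.2⟩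
  obtain ⟨r, hr_mem, hr_sub⟩ :=
    mem_nhdsGT_iff_exists_Ioc_subset.mp (hev2.and hev3)
  have hmr : m < r := hr_mem
  have hrq : r < q := (hr_sub ⟨hmr, le_refl r⟩).2.2
  have hanti : StrictAntiOn w (Set.Icc m r) := by
    apply strictAntiOn_of_deriv_neg (convex_Icc m r)
    · exact hwc.mono (Icc_subset_Icc hmIcc.1 hrq.le)
    · intro x hx
      rw [interior_Icc] at hx
      have hxpq : x ∈ Set.Ioo p q := ⟨lt_trans hmo.1 hx.1, lt_trans hx.2 hrq⟩
      rw [(hw' x hxpq).deriv]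
      exact (hr_sub ⟨hx.1, hx.2.le⟩).1
  have hlt : w r < w m :=
    hanti (left_mem_Icc.mpr hmr.le) (right_mem_Icc.mpr hmr.le) hmr
  have : w m ≤ w r := hmin ⟨le_trans hmIcc.1 hmr.le, hrq.le⟩
  linarith

/-- The drop meets the ground with strictly negative slope at the front endpoint. -/
theorem stmt_1 (a b lam κ α V₀ : ℝ) (u u' u'' : ℝ → ℝ)
    (hab : a < b) (hκ : 0 < κ) (hα : α ∈ Set.Ioo 0 (Real.pi / 2)) (hV : 0 < V₀)
    (hu' : ∀ x ∈ Set.Icc a b, HasDerivWithinAt u (u' x) (Set.Icc a b) x)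
    (hu'' : ∀ x ∈ Set.Icc a b, HasDerivWithinAt u' (u'' x) (Set.Icc a b) x)
    (hu''c : ContinuousOn u'' (Set.Icc a b))
    (hode : ∀ x ∈ Set.Ioo a b,
      -u'' x = lam - κ * Real.cos α * u x + κ * Real.sin α * (x - b))
    (ha0 : u a = 0) (hb0 : u b = 0)
    (hvol : ∫ x in a..b, u x = V₀) :
    u' b < 0 := by
  set c : ℝ := κ * Real.cos α with hcdef
  set s : ℝ := κ * Real.sin α with hsdef
  have hc : 0 < c := by
    apply mul_pos hκ
    apply Real.cos_pos_of_mem_Ioo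
    constructor
    · have := Real.pi_pos; linarith [hα.1]
    · exact hα.2
  have hs : 0 < s := by
    apply mul_pos hκ
    apply Real.sin_pos_of_pos_of_lt_pi hα.1
    have := Real.pi_pos; linarith [hα.2]
  -- continuity and interior derivatives
  have hucont : ContinuousOn u (Set.Icc a b) :=
    fun x hx => (hu' x hx).continuousWithinAt
  have hu'cont : ContinuousOn u' (Set.Icc a b) :=
    fun x hx => (hu'' x hx).continuousWithinAt
  have haI : ∀ x ∈ Set.Ioo a b, HasDerivAt u (u' x) x :=
    fun x hx => (hu' x (Ioo_subset_Icc_self hx)).hasDerivAt (Icc_mem_nhds hx.1 hx.2)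
  have hbI : ∀ x ∈ Set.Ioo a b, HasDerivAt u' (u'' x) x :=
    fun x hx => (hu'' x (Ioo_subset_Icc_self hx)).hasDerivAt (Icc_mem_nhds hx.1 hx.2)
  -- Energy identity: s * V₀ = u'(b)^2/2 - u'(a)^2/2
  have henergy : s * V₀ = u' b ^ 2 / 2 - u' a ^ 2 / 2 := by
    have hHd : ∀ x ∈ Set.Ioo a b,
        HasDerivWithinAt (fun y => u' y ^ 2 / 2 - c * u y ^ 2 / 2 + lam * u y
          + s * ((y - b) * u y)) (s * u x) (Set.Ioi x) x := by
      intro x hx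
      have du := haI x hx
      have du' := hbI x hx
      have d1 : HasDerivAt (fun y => u' y ^ 2 / 2)
          (2 * u' x ^ 1 * u'' x / 2) x := (du'.pow 2).div_const 2
      have d2 : HasDerivAt (fun y => c * u y ^ 2 / 2)
          (c * (2 * u x ^ 1 * u' x) / 2) x := ((du.pow 2).const_mul c).div_const 2
      have d3 : HasDerivAt (fun y => lam * u y) (lam * u' x) x := du.const_mul lam
      have d4 : HasDerivAt (fun y => (y - b) * u y)
          (1 * u x + (x - b) * u' x) x := ((hasDerivAt_id x).sub_const b).mul du
      have d5 : HasDerivAt (fun y => s * ((y - b) * u y))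
          (s * (1 * u x + (x - b) * u' x)) x := d4.const_mul s
      have dH := ((d1.sub d2).add d3).add d5
      have hODE := hode x hx
      have hval : 2 * u' x ^ 1 * u'' x / 2 - c * (2 * u x ^ 1 * u' x) / 2
          + lam * u' x + s * (1 * u x + (x - b) * u' x) = s * u x := by
        have hu''x : u'' x = c * u x - lam - s * (x - b) := by linarith
        rw [hu''x]; ring
      rw [hval] at dH
      exact dH.hasDerivWithinAt
    have hHcont : ContinuousOn (fun y => u' y ^ 2 / 2 - c * u y ^ 2 / 2 + lam * u y
        + s * ((y - b) * u y)) (Set.Icc a b) := by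
      apply ContinuousOn.add
      apply ContinuousOn.add
      apply ContinuousOn.sub
      · exact (hu'cont.pow 2).div_const 2
      · exact (continuousOn_const.mul (hucont.pow 2)).div_const 2
      · exact continuousOn_const.mul hucont
      · exact continuousOn_const.mul
          ((continuousOn_id.sub continuousOn_const).mul hucont)
    have hInt : IntervalIntegrable (fun x => s * u x) volume a b := by
      apply ContinuousOn.intervalIntegrable
      rw [uIcc_of_le hab.le]
      exact continuousOn_const.mul hucont
    have hFT := intervalIntegral.integral_eq_sub_of_hasDeriv_right_of_le hab.le
      hHcont hHd hInt
    have hL : ∫ y in a..b, s * u y = s * V₀ := by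
      rw [intervalIntegral.integral_const_mul, hvol]
    rw [hL] at hFT
    rw [hFT, ha0, hb0]
    ring
  -- u'(b) ≠ 0
  have hb'ne : u' b ≠ 0 := by
    intro h0
    rw [h0] at henergy
    nlinarith [sq_nonneg (u' a), mul_pos hs hV]
  -- suppose u'(b) ≥ 0, so u'(b) > 0
  by_contra hgoal
  push_neg at hgoal
  have hub' : 0 < u' b := lt_of_le_of_ne hgoal (Ne.symm hb'ne)
  -- u is negative at points arbitrarily close to b
  have hnbne : (𝓝[Set.Ioo a b] b).NeBot := by
    rw [← mem_closure_iff_nhdsWithin_neBot, closure_Ioo hab.ne]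
    exact right_mem_Icc.mpr hab.le
  have hnb : 𝓝[Set.Ioo a b] b ≤ 𝓝[Set.Icc a b \ {b}] b :=
    nhdsWithin_mono b (fun x hx => ⟨Ioo_subset_Icc_self hx, ne_of_lt hx.2⟩)
  have hslopeb : Filter.Tendsto (slope u b) (𝓝[Set.Ioo a b] b) (𝓝 (u' b)) := by
    have h := hu' b (right_mem_Icc.mpr hab.le)
    rw [hasDerivWithinAt_iff_tendsto_slope] at h
    exact h.mono_left hnb
  have hevpos : ∀ᶠ x in 𝓝[Set.Ioo a b] b, 0 < slope u b x :=
    hslopeb.eventually (lt_mem_nhds hub')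
  have hevneg : ∀ᶠ x in 𝓝[Set.Ioo a b] b, u x < 0 := by
    filter_upwards [hevpos, self_mem_nhdsWithin] with x hx hx'
    rw [slope_def_field, hb0, sub_zero] at hx
    have hxb : x - b < 0 := sub_neg.mpr hx'.2
    by_contra hux
    push_neg at hux
    have : u x / (x - b) ≤ 0 := div_nonpos_iff.mpr (Or.inl ⟨hux, hxb.le⟩)
    linarith
  have hnear : ∀ y, y < b → ∃ x, y < x ∧ x ∈ Set.Ioo a b ∧ u x < 0 := by
    intro y hy
    have h4 : ∀ᶠ x in 𝓝[Set.Ioo a b] b, y < x :=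
      (eventually_gt_nhds hy).filter_mono nhdsWithin_le_nhds
    obtain ⟨x, hx1, hx2, hx3⟩ := (h4.and (hevneg.and self_mem_nhdsWithin)).exists
    exact ⟨x, hx1, hx3, hx2⟩
  -- final contradiction helper: u cannot be ≤ 0 on all of [a,b]
  have hfinal : ¬ (∀ x ∈ Set.Icc a b, u x ≤ 0) := by
    intro hle
    have h1 : 0 ≤ ∫ x in a..b, -u x := by
      apply intervalIntegral.integral_nonneg hab.le
      intro x hx
      simpa using hle x hx
    rw [intervalIntegral.integral_neg, hvol] at h1
    linarith
  -- case analysis on lam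
  rcases le_or_gt lam 0 with hlam | hlam
  · -- lam ≤ 0 : forcing term is negative everywhere, so u ≤ 0 on [a,b]
    apply hfinal
    intro x hx
    have hmp := minprin a b (fun y => -u y) (fun y => -u' y) (fun y => -u'' y) hab
      hucont.neg (fun y hy => (haI y hy).neg) (fun y hy => (hbI y hy).neg)
      (by simp [ha0]) (by simp [hb0])
      (fun y hy hneg => by
        have h := hode y hy
        have huy : 0 < u y := by simpa using hneg
        have h1 : c * u y > 0 := mul_pos hc huy
        have h2 : s * (y - b) < 0 := mul_neg_of_pos_of_neg hs (sub_neg.mpr hy.2)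
        show -u'' y < 0
        linarith)
      x hx
    simpa using hmp
  rcases le_or_gt (s * (b - a)) lam with hcore | hcore
  · -- lam ≥ s(b-a): forcing term positive on (a,b), so u ≥ 0 on [a,b]: contradiction
    obtain ⟨x₀, _, hx₀I, hx₀neg⟩ := hnear a hab
    have hpos := minprin a b u u' u'' hab hucont haI hbI
      (le_of_eq ha0.symm) (le_of_eq hb0.symm)
      (fun x hx hneg => by
        have h := hode x hx
        have h1 : s * (x - a) ≤ lam + s * (x - b) := by nlinarith
        have h2 : 0 < s * (x - a) := mul_pos hs (sub_pos.mpr hx.1)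
        have h3 : c * u x < 0 := mul_neg_of_pos_of_neg hc hneg
        linarith)
      x₀ (Ioo_subset_Icc_self hx₀I)
    linarith
  · -- 0 < lam < s(b-a): split at x₁ = b - lam/s
    set x₁ : ℝ := b - lam / s with hx₁def
    have hx₁a : a < x₁ := by
      have h5 : lam / s < b - a := by
        rw [div_lt_iff₀ hs]
        nlinarith [hcore]
      rw [hx₁def]
      linarith
    have hx₁b : x₁ < b := by
      rw [hx₁def]
      have : 0 < lam / s := div_pos hlam hs
      linarith
    have hfx : ∀ x : ℝ, lam + s * (x - b) = s * (x - x₁) := by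
      intro x
      rw [hx₁def]
      field_simp
      ring
    -- u ≤ 0 on [x₁, b]
    have hA : ∀ y ∈ Set.Icc x₁ b, u y ≤ 0 := by
      intro y hy
      by_contra hypos
      push_neg at hypos
      have hyb : y < b := by
        rcases eq_or_lt_of_le hy.2 with h | h
        · exfalso; rw [h, hb0] at hypos; linarith
        · exact h
      obtain ⟨x₀, hx₀y, hx₀I, hx₀neg⟩ := hnear y hyb
      have hay : a < y := lt_of_lt_of_le hx₁a hy.1
      have hsub : ∀ x ∈ Set.Ioo y b, x ∈ Set.Ioo a b :=
        fun x hx => ⟨lt_trans hay hx.1, hx.2⟩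
      have hpos := minprin y b u u' u'' hyb
        (hucont.mono (Icc_subset_Icc hay.le le_rfl))
        (fun x hx => haI x (hsub x hx))
        (fun x hx => hbI x (hsub x hx))
        hypos.le (le_of_eq hb0.symm)
        (fun x hx hneg => by
          have h := hode x (hsub x hx)
          have hxx₁ : x₁ < x := lt_of_le_of_lt hy.1 hx.1
          have h1 : 0 < lam + s * (x - b) := by
            rw [hfx]
            exact mul_pos hs (sub_pos.mpr hxx₁)
          have h3 : c * u x < 0 := mul_neg_of_pos_of_neg hc hneg
          linarith)
        x₀ ⟨hx₀y.le, hx₀I.2.le⟩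
      linarith
    -- u ≤ 0 on [a, x₁]
    have hB : ∀ y ∈ Set.Icc a x₁, u y ≤ 0 := by
      have hsub : ∀ x ∈ Set.Ioo a x₁, x ∈ Set.Ioo a b :=
        fun x hx => ⟨hx.1, lt_trans hx.2 hx₁b⟩
      have hmp := minprin a x₁ (fun y => -u y) (fun y => -u' y) (fun y => -u'' y) hx₁a
        (hucont.neg.mono (Icc_subset_Icc le_rfl hx₁b.le))
        (fun x hx => (haI x (hsub x hx)).neg)
        (fun x hx => (hbI x (hsub x hx)).neg)
        (by simp [ha0])
        (by
          have := hA x₁ (left_mem_Icc.mpr hx₁b.le)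
          simpa using this)
        (fun x hx hneg => by
          have h := hode x (hsub x hx)
          have huy : 0 < u x := by simpa using hneg
          have h1 : lam + s * (x - b) < 0 := by
            rw [hfx]
            exact mul_neg_of_pos_of_neg hs (sub_neg.mpr hx.2)
          have h3 : 0 < c * u x := mul_pos hc huy
          show -u'' x < 0
          linarith)
      intro y hy
      have := hmp y hy
      simpa using this
    apply hfinal
    intro x hx
    rcases le_total x x₁ with h | h
    · exact hB x ⟨hx.1, h⟩
    · exact hA x ⟨h, hx.2⟩
end

section
/- Let u ∈ C^2([a,b]) satisfy -u'' = λ - κ cos(α) u + κ sin(α)(x - b) on (a,b) with u(a) = u(b) = 0, ∫_a^b u dx = V₀, and u > 0 on (a,b). Then u'(b)² - u'(a)² = 2 κ sin(α) V₀. -/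
open MeasureTheory Real Set

/-- Identity relating advancing and receding slopes to the volume. -/
theorem stmt_2 (a b lam κ α V₀ : ℝ) (u u' u'' : ℝ → ℝ)
    (hab : a < b) (hκ : 0 < κ) (hα : α ∈ Set.Ioo 0 (Real.pi / 2)) (hV : 0 < V₀)
    (hu' : ∀ x ∈ Set.Icc a b, HasDerivWithinAt u (u' x) (Set.Icc a b) x)
    (hu'' : ∀ x ∈ Set.Icc a b, HasDerivWithinAt u' (u'' x) (Set.Icc a b) x)
    (hu''c : ContinuousOn u'' (Set.Icc a b))
    (hode : ∀ x ∈ Set.Ioo a b,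
      -u'' x = lam - κ * Real.cos α * u x + κ * Real.sin α * (x - b))
    (ha0 : u a = 0) (hb0 : u b = 0)
    (hpos : ∀ x ∈ Set.Ioo a b, 0 < u x)
    (hvol : ∫ x in a..b, u x = V₀) :
    (u' b) ^ 2 - (u' a) ^ 2 = 2 * κ * Real.sin α * V₀ := by
  have hcu : ContinuousOn u (Set.Icc a b) := fun x hx => (hu' x hx).continuousWithinAt
  have hcu' : ContinuousOn u' (Set.Icc a b) := fun x hx => (hu'' x hx).continuousWithinAt
  have huIcc : Set.uIcc a b = Set.Icc a b := Set.uIcc_of_le hab.le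
  -- derivatives at interior points
  have hdu : ∀ x ∈ Set.Ioo a b, HasDerivAt u (u' x) x := fun x hx =>
    (hu' x (Set.Ioo_subset_Icc_self hx)).hasDerivAt (Icc_mem_nhds hx.1 hx.2)
  have hdu' : ∀ x ∈ Set.Ioo a b, HasDerivAt u' (u'' x) x := fun x hx =>
    (hu'' x (Set.Ioo_subset_Icc_self hx)).hasDerivAt (Icc_mem_nhds hx.1 hx.2)
  -- FTC helper
  have ftc : ∀ (f f' : ℝ → ℝ), ContinuousOn f (Set.Icc a b) →
      (∀ x ∈ Set.Ioo a b, HasDerivAt f (f' x) x) →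
      IntervalIntegrable f' volume a b →
      ∫ x in a..b, f' x = f b - f a := fun f f' hc hd hi =>
    intervalIntegral.integral_eq_sub_of_hasDeriv_right_of_le hab.le hc
      (fun x hx => (hd x hx).hasDerivWithinAt) hi
  -- integrability facts
  have hiu : IntervalIntegrable u volume a b :=
    (hcu.mono (by rw [huIcc])).intervalIntegrable
  have hiu' : IntervalIntegrable u' volume a b :=
    (hcu'.mono (by rw [huIcc])).intervalIntegrable
  have hiuu' : IntervalIntegrable (fun x => u x * u' x) volume a b :=
    ((hcu.mul hcu').mono (by rw [huIcc])).intervalIntegrable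
  have hiw : IntervalIntegrable (fun x => u x + (x - b) * u' x) volume a b := by
    apply ContinuousOn.intervalIntegrable
    rw [huIcc]
    exact hcu.add (((continuousOn_id.sub continuousOn_const)).mul hcu')
  have hixu' : IntervalIntegrable (fun x => (x - b) * u' x) volume a b := by
    apply ContinuousOn.intervalIntegrable
    rw [huIcc]
    exact ((continuousOn_id.sub continuousOn_const)).mul hcu'
  have hiu'u'' : IntervalIntegrable (fun x => u' x * u'' x) volume a b :=
    ((hcu'.mul hu''c).mono (by rw [huIcc])).intervalIntegrable
  -- ∫ u' = 0
  have I1 : ∫ x in a..b, u' x = 0 := by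
    rw [ftc u u' hcu hdu hiu']; rw [ha0, hb0]; ring
  -- ∫ u u' = 0
  have I2 : ∫ x in a..b, u x * u' x = 0 := by
    have := ftc (fun x => u x ^ 2 / 2) (fun x => u x * u' x) (by fun_prop)
      (fun x hx => by
        have h := ((hdu x hx).mul (hdu x hx)).div_const 2
        have h2 : HasDerivAt (fun y => u y ^ 2 / 2) ((u' x * u x + u x * u' x) / 2) x := by
          simpa only [pow_two, Pi.mul_apply] using h
        convert h2 using 1; ring) hiuu'
    rw [this]; simp [ha0, hb0]
  -- ∫ (u + (x-b) u') = 0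
  have I3 : ∫ x in a..b, (u x + (x - b) * u' x) = 0 := by
    have := ftc (fun x => (x - b) * u x) (fun x => u x + (x - b) * u' x)
      (((continuousOn_id.sub continuousOn_const)).mul hcu)
      (fun x hx => by
        have h := ((hasDerivAt_id x).sub_const b).mul (hdu x hx)
        exact h.congr_deriv (by simp only [id_eq]; ring)) hiw
    rw [this]; simp [ha0, hb0]
  -- hence ∫ (x-b) u' = -V₀
  have I3' : ∫ x in a..b, (x - b) * u' x = -V₀ := by
    have hsplit : ∫ x in a..b, (u x + (x - b) * u' x)
        = (∫ x in a..b, u x) + ∫ x in a..b, (x - b) * u' x :=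
      intervalIntegral.integral_add hiu hixu'
    rw [hsplit, hvol] at I3
    linarith
  -- ∫ u' u'' = (u' b ^2 - u' a ^2)/2
  have I4 : ∫ x in a..b, u' x * u'' x = ((u' b) ^ 2 - (u' a) ^ 2) / 2 := by
    have := ftc (fun x => u' x ^ 2 / 2) (fun x => u' x * u'' x) (by fun_prop)
      (fun x hx => by
        have h := ((hdu' x hx).mul (hdu' x hx)).div_const 2
        have h2 : HasDerivAt (fun y => u' y ^ 2 / 2) ((u'' x * u' x + u' x * u'' x) / 2) x := by
          simpa only [pow_two, Pi.mul_apply] using h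
        convert h2 using 1; ring) hiu'u''
    rw [this]; ring
  -- rewrite the RHS using the ODE
  have key : ∫ x in a..b, u' x * u'' x
      = ∫ x in a..b, (-lam * u' x + κ * Real.cos α * (u x * u' x)
          - κ * Real.sin α * ((x - b) * u' x)) := by
    apply intervalIntegral.integral_congr_ae
    have hne : ∀ᵐ x : ℝ ∂volume, x ≠ b := by
      rw [MeasureTheory.ae_iff]
      have : {x : ℝ | ¬x ≠ b} = {b} := by ext x; simp
      rw [this]; exact measure_singleton b
    filter_upwards [hne] with x hx hxm
    rw [Set.uIoc_of_le hab.le] at hxm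
    have hxo : x ∈ Set.Ioo a b := ⟨hxm.1, lt_of_le_of_ne hxm.2 hx⟩
    have h := hode x hxo
    have hu''x : u'' x = -(lam - κ * Real.cos α * u x + κ * Real.sin α * (x - b)) := by
      linarith
    rw [hu''x]; ring
  -- evaluate the RHS
  have hi2 : IntervalIntegrable (fun x => κ * Real.cos α * (u x * u' x)) volume a b :=
    hiuu'.const_mul _
  have hi3 : IntervalIntegrable (fun x => κ * Real.sin α * ((x - b) * u' x)) volume a b :=
    hixu'.const_mul _
  have hi1 : IntervalIntegrable (fun x => -lam * u' x) volume a b := hiu'.const_mul _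
  have hrhs : ∫ x in a..b, (-lam * u' x + κ * Real.cos α * (u x * u' x)
      - κ * Real.sin α * ((x - b) * u' x)) = κ * Real.sin α * V₀ := by
    rw [intervalIntegral.integral_sub (hi1.add hi2) hi3,
      intervalIntegral.integral_add hi1 hi2,
      intervalIntegral.integral_const_mul, intervalIntegral.integral_const_mul,
      intervalIntegral.integral_const_mul, I1, I2, I3']
    ring
  rw [key, hrhs] at I4
  linarith
end

section
/- Let u₁, u₂ ∈ C^2([a,b]) both satisfy -uᵢ'' = λᵢ - κ cos(α) uᵢ + κ sin(α)(x - b) on (a,b) with uᵢ(a) = uᵢ(b) = 0, uᵢ > 0 on (a,b), and ∫_a^b u₁ dx = ∫_a^b u₂ dx = V₀, for constants λ₁, λ₂ ∈ ℝ. Then λ₁ = λ₂ and u₁ = u₂ on [a,b]. -/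
open MeasureTheory Real Set

/-- Uniqueness of the drop profile and Lagrange multiplier with prescribed support and volume. -/
theorem stmt_3 (a b lam₁ lam₂ κ α V₀ : ℝ) (u₁ u₁' u₁'' u₂ u₂' u₂'' : ℝ → ℝ)
    (hab : a < b) (hκ : 0 < κ) (hα : α ∈ Set.Ioo 0 (Real.pi / 2)) (hV : 0 < V₀)
    (hu₁' : ∀ x ∈ Set.Icc a b, HasDerivWithinAt u₁ (u₁' x) (Set.Icc a b) x)
    (hu₁'' : ∀ x ∈ Set.Icc a b, HasDerivWithinAt u₁' (u₁'' x) (Set.Icc a b) x)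
    (hu₁''c : ContinuousOn u₁'' (Set.Icc a b))
    (hu₂' : ∀ x ∈ Set.Icc a b, HasDerivWithinAt u₂ (u₂' x) (Set.Icc a b) x)
    (hu₂'' : ∀ x ∈ Set.Icc a b, HasDerivWithinAt u₂' (u₂'' x) (Set.Icc a b) x)
    (hu₂''c : ContinuousOn u₂'' (Set.Icc a b))
    (hode₁ : ∀ x ∈ Set.Ioo a b,
      -u₁'' x = lam₁ - κ * Real.cos α * u₁ x + κ * Real.sin α * (x - b))
    (hode₂ : ∀ x ∈ Set.Ioo a b,
      -u₂'' x = lam₂ - κ * Real.cos α * u₂ x + κ * Real.sin α * (x - b))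
    (ha₁ : u₁ a = 0) (hb₁ : u₁ b = 0) (ha₂ : u₂ a = 0) (hb₂ : u₂ b = 0)
    (hpos₁ : ∀ x ∈ Set.Ioo a b, 0 < u₁ x) (hpos₂ : ∀ x ∈ Set.Ioo a b, 0 < u₂ x)
    (hvol₁ : ∫ x in a..b, u₁ x = V₀) (hvol₂ : ∫ x in a..b, u₂ x = V₀) :
    lam₁ = lam₂ ∧ ∀ x ∈ Set.Icc a b, u₁ x = u₂ x := by
  obtain ⟨hα0, hα2⟩ := hα
  have hcos : 0 < Real.cos α :=
    Real.cos_pos_of_mem_Ioo ⟨by linarith [Real.pi_pos], hα2⟩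
  have hcpos : 0 < κ * Real.cos α := mul_pos hκ hcos
  set w : ℝ → ℝ := fun x => u₁ x - u₂ x with hw_def
  set w' : ℝ → ℝ := fun x => u₁' x - u₂' x with hw'_def
  set w'' : ℝ → ℝ := fun x => u₁'' x - u₂'' x with hw''_def
  have hw' : ∀ x ∈ Set.Icc a b, HasDerivWithinAt w (w' x) (Set.Icc a b) x :=
    fun x hx => (hu₁' x hx).sub (hu₂' x hx)
  have hw'' : ∀ x ∈ Set.Icc a b, HasDerivWithinAt w' (w'' x) (Set.Icc a b) x :=
    fun x hx => (hu₁'' x hx).sub (hu₂'' x hx)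
  have cw : ContinuousOn w (Set.Icc a b) := fun x hx => (hw' x hx).continuousWithinAt
  have cw' : ContinuousOn w' (Set.Icc a b) := fun x hx => (hw'' x hx).continuousWithinAt
  have cu₁ : ContinuousOn u₁ (Set.Icc a b) := fun x hx => (hu₁' x hx).continuousWithinAt
  have cu₂ : ContinuousOn u₂ (Set.Icc a b) := fun x hx => (hu₂' x hx).continuousWithinAt
  have cw'' : ContinuousOn w'' (Set.Icc a b) := hu₁''c.sub hu₂''c
  have hwa : w a = 0 := by simp [hw_def, ha₁, ha₂]
  have hwb : w b = 0 := by simp [hw_def, hb₁, hb₂]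
  have hode : ∀ x ∈ Set.Ioo a b,
      w'' x = κ * Real.cos α * w x - (lam₁ - lam₂) := by
    intro x hx
    have h1 := hode₁ x hx
    have h2 := hode₂ x hx
    simp only [hw_def, hw''_def]
    ring_nf
    nlinarith [h1, h2]
  -- FTC for w * w'
  have hgderiv : ∀ x ∈ Set.Ioo a b,
      HasDerivWithinAt (fun y => w y * w' y) (w' x * w' x + w x * w'' x) (Set.Ioi x) x := by
    intro x hx
    have hmem : Set.Icc a b ∈ nhds x := Icc_mem_nhds hx.1 hx.2
    exact (((hw' x (Ioo_subset_Icc_self hx)).hasDerivAt hmem).mul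
      ((hw'' x (Ioo_subset_Icc_self hx)).hasDerivAt hmem)).hasDerivWithinAt
  have hint : IntervalIntegrable (fun x => w' x * w' x + w x * w'' x) volume a b := by
    apply ContinuousOn.intervalIntegrable
    rw [uIcc_of_le hab.le]
    exact (cw'.mul cw').add (cw.mul cw'')
  have hI : ∫ x in a..b, (w' x * w' x + w x * w'' x) = 0 := by
    rw [intervalIntegral.integral_eq_sub_of_hasDeriv_right_of_le hab.le
      (cw.mul cw') hgderiv hint, Pi.mul_apply, Pi.mul_apply, hwb, hwa]
    ring
  -- rewrite the integrand using the ODE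
  have haeb : ∀ᵐ x : ℝ, x ≠ b := by
    have h0 : volume ({b} : Set ℝ) = 0 := measure_singleton b
    rw [MeasureTheory.ae_iff]
    convert h0 using 2
    ext x; simp
  have hcongr : ∫ x in a..b, (w' x * w' x + w x * w'' x)
      = ∫ x in a..b, (w' x * w' x
          + (κ * Real.cos α * (w x * w x) - (lam₁ - lam₂) * w x)) := by
    apply intervalIntegral.integral_congr_ae
    filter_upwards [haeb] with x hxb hx
    rw [uIoc_of_le hab.le] at hx
    have hxo : x ∈ Set.Ioo a b := ⟨hx.1, lt_of_le_of_ne hx.2 hxb⟩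
    rw [hode x hxo]
    ring
  -- integrability facts
  have intw : IntervalIntegrable w volume a b := by
    apply ContinuousOn.intervalIntegrable; rw [uIcc_of_le hab.le]; exact cw
  have intw2 : IntervalIntegrable (fun x => w x * w x) volume a b := by
    apply ContinuousOn.intervalIntegrable; rw [uIcc_of_le hab.le]; exact cw.mul cw
  have intw'2 : IntervalIntegrable (fun x => w' x * w' x) volume a b := by
    apply ContinuousOn.intervalIntegrable; rw [uIcc_of_le hab.le]; exact cw'.mul cw'
  have intu₁ : IntervalIntegrable u₁ volume a b := by
    apply ContinuousOn.intervalIntegrable; rw [uIcc_of_le hab.le]; exact cu₁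
  have intu₂ : IntervalIntegrable u₂ volume a b := by
    apply ContinuousOn.intervalIntegrable; rw [uIcc_of_le hab.le]; exact cu₂
  have hvolw : ∫ x in a..b, w x = 0 := by
    have : ∫ x in a..b, w x = (∫ x in a..b, u₁ x) - ∫ x in a..b, u₂ x :=
      intervalIntegral.integral_sub intu₁ intu₂
    rw [this, hvol₁, hvol₂, sub_self]
  have hsplit : (∫ x in a..b, w' x * w' x)
      + κ * Real.cos α * (∫ x in a..b, w x * w x) = 0 := by
    have h1 : ∫ x in a..b, (w' x * w' x
        + (κ * Real.cos α * (w x * w x) - (lam₁ - lam₂) * w x)) = 0 := by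
      rw [← hcongr]; exact hI
    have h2 : ∫ x in a..b, (w' x * w' x
        + (κ * Real.cos α * (w x * w x) - (lam₁ - lam₂) * w x))
        = (∫ x in a..b, w' x * w' x)
          + ((κ * Real.cos α) * (∫ x in a..b, w x * w x)
            - (lam₁ - lam₂) * (∫ x in a..b, w x)) := by
      rw [intervalIntegral.integral_add intw'2 (((intw2.const_mul _)).sub (intw.const_mul _)),
        intervalIntegral.integral_sub (intw2.const_mul _) (intw.const_mul _),
        intervalIntegral.integral_const_mul, intervalIntegral.integral_const_mul]
    rw [h2, hvolw] at h1
    linarith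
  have hA : 0 ≤ ∫ x in a..b, w' x * w' x :=
    intervalIntegral.integral_nonneg hab.le (fun u _ => mul_self_nonneg _)
  have hB : 0 ≤ ∫ x in a..b, w x * w x :=
    intervalIntegral.integral_nonneg hab.le (fun u _ => mul_self_nonneg _)
  have hB0 : ∫ x in a..b, w x * w x = 0 := by nlinarith
  -- w vanishes on [a,b]
  have hae : ∀ᵐ x : ℝ, x ∈ Set.Ioc a b → w x * w x = 0 := by
    have h := (intervalIntegral.integral_eq_zero_iff_of_le_of_nonneg_ae hab.le
      (Filter.Eventually.of_forall fun x => mul_self_nonneg (w x)) intw2).mp hB0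
    have h' := (ae_restrict_iff' measurableSet_Ioc).mp h
    filter_upwards [h'] with x hx hx' using hx hx'
  have hw0 : ∀ x ∈ Set.Icc a b, w x = 0 := by
    intro x hx
    by_contra hne
    have hxIoo : x ∈ Set.Ioo a b := by
      rcases hx.1.lt_or_eq with h | h
      · rcases hx.2.lt_or_eq with h' | h'
        · exact ⟨h, h'⟩
        · exact absurd (h' ▸ hwb) hne
      · exact absurd (h ▸ hwa) hne
    have hUopen : IsOpen (Set.Ioo a b ∩ w ⁻¹' ({0}ᶜ)) :=
      (cw.mono Ioo_subset_Icc_self).isOpen_inter_preimage isOpen_Ioo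
        (isOpen_compl_iff.mpr isClosed_singleton)
    have hUpos : 0 < volume (Set.Ioo a b ∩ w ⁻¹' ({0}ᶜ)) :=
      hUopen.measure_pos volume ⟨x, hxIoo, hne⟩
    have hU0 : volume (Set.Ioo a b ∩ w ⁻¹' ({0}ᶜ)) = 0 := by
      refine measure_mono_null ?_ (MeasureTheory.ae_iff.mp hae)
      intro y hy
      simp only [Set.mem_setOf_eq, Classical.not_imp]
      refine ⟨Ioo_subset_Ioc_self hy.1, ?_⟩
      have : w y ≠ 0 := hy.2
      exact fun h => this (mul_self_eq_zero.mp h)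
    exact absurd hU0 hUpos.ne'
  -- derivatives vanish
  have hw'0 : ∀ x ∈ Set.Ioo a b, w' x = 0 := by
    intro x hx
    have hmem : Set.Icc a b ∈ nhds x := Icc_mem_nhds hx.1 hx.2
    have h1 : HasDerivAt w (w' x) x := (hw' x (Ioo_subset_Icc_self hx)).hasDerivAt hmem
    have heq : w =ᶠ[nhds x] (fun _ => (0 : ℝ)) := by
      filter_upwards [hmem] with y hy using hw0 y hy
    have h2 : HasDerivAt w 0 x :=
      HasDerivAt.congr_of_eventuallyEq (hasDerivAt_const x (0 : ℝ)) heq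
    exact h1.unique h2
  have hmid : (a + b) / 2 ∈ Set.Ioo a b := ⟨by linarith, by linarith⟩
  have hw''0 : w'' ((a + b) / 2) = 0 := by
    have hmem : Set.Icc a b ∈ nhds ((a + b) / 2) := Icc_mem_nhds hmid.1 hmid.2
    have h1 : HasDerivAt w' (w'' ((a + b) / 2)) ((a + b) / 2) :=
      (hw'' _ (Ioo_subset_Icc_self hmid)).hasDerivAt hmem
    have heq : w' =ᶠ[nhds ((a + b) / 2)] (fun _ => (0 : ℝ)) := by
      filter_upwards [Ioo_mem_nhds hmid.1 hmid.2] with y hy using hw'0 y hy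
    have h2 : HasDerivAt w' 0 ((a + b) / 2) :=
      HasDerivAt.congr_of_eventuallyEq (hasDerivAt_const _ (0 : ℝ)) heq
    exact h1.unique h2
  have hlam : lam₁ = lam₂ := by
    have h := hode _ hmid
    rw [hw''0, hw0 _ (Ioo_subset_Icc_self hmid)] at h
    have : (0 : ℝ) = -(lam₁ - lam₂) := by linarith [h]
    linarith
  refine ⟨hlam, fun x hx => ?_⟩
  have := hw0 x hx
  simp only [hw_def] at this
  linarith
end

section
/- With the setup of the previous statement (H strictly decreasing, H(ℓ) - G(ℓ) = κ sin α V₀, G(ℓ_c) = 0, F = G + H), the traveling wave speed c defined by c = ½(H(ℓ₀) - G(ℓ₀)) when G(ℓ₀) > 0 and c = H(ℓ₀) - β when G(ℓ₀) = 0 (i.e. ℓ₀ = ℓ_c) satisfies: c = ½ V₀ κ sin α if V₀ ≤ 2β/(κ sin α), and c = V₀ κ sin α - β if V₀ ≥ 2β/(κ sin α). -/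
open Real Set

/-- Formula (18) for the traveling wave speed as a function of the volume. -/
theorem stmt_10 (β κ α V₀ ℓc c ℓ₀ : ℝ) (G H : ℝ → ℝ)
    (hβ : 0 < β) (hκ : 0 < κ) (hα : α ∈ Set.Ioo 0 (Real.pi / 2)) (hV : 0 < V₀)
    (hℓc : 0 < ℓc)
    (hGanti : StrictAntiOn G (Set.Ioc 0 ℓc)) (hHanti : StrictAntiOn H (Set.Ioc 0 ℓc))
    (hHG : ∀ ℓ ∈ Set.Ioc 0 ℓc, H ℓ - G ℓ = κ * Real.sin α * V₀)
    (hGℓc : G ℓc = 0)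
    (hℓ₀ : ℓ₀ ∈ Set.Ioc 0 ℓc)
    (hmax : max (-(G ℓ₀ + H ℓ₀ - 2 * β)) (ℓ₀ - ℓc) = 0)
    (hc₁ : 0 < G ℓ₀ → c = (H ℓ₀ - G ℓ₀) / 2)
    (hc₂ : G ℓ₀ = 0 → c = H ℓ₀ - β) :
    (V₀ ≤ 2 * β / (κ * Real.sin α) → c = V₀ * κ * Real.sin α / 2) ∧
      (2 * β / (κ * Real.sin α) ≤ V₀ → c = V₀ * κ * Real.sin α - β) := by
  obtain ⟨hα1, hα2⟩ := hα
  have hsin : 0 < Real.sin α :=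
    Real.sin_pos_of_pos_of_lt_pi hα1 (by linarith [Real.pi_pos])
  have hs : 0 < κ * Real.sin α := mul_pos hκ hsin
  have hHGℓ₀ := hHG ℓ₀ hℓ₀
  have hcomm : V₀ * κ * Real.sin α = κ * Real.sin α * V₀ := by ring
  have hGnn : 0 ≤ G ℓ₀ := by
    rcases eq_or_lt_of_le hℓ₀.2 with h | h
    · rw [h, hGℓc]
    · have := hGanti hℓ₀ ⟨hℓc, le_refl ℓc⟩ h
      rw [hGℓc] at this; linarith
  have h1 : 0 ≤ G ℓ₀ + H ℓ₀ - 2 * β := by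
    have := le_max_left (-(G ℓ₀ + H ℓ₀ - 2 * β)) (ℓ₀ - ℓc)
    rw [hmax] at this; linarith
  have hkey : G ℓ₀ + H ℓ₀ = 2 * β ∨ ℓ₀ = ℓc := by
    rcases max_cases (-(G ℓ₀ + H ℓ₀ - 2 * β)) (ℓ₀ - ℓc) with ⟨h, _⟩ | ⟨h, _⟩
    · left; rw [h] at hmax; linarith
    · right; rw [h] at hmax; linarith
  constructor
  · intro hV₀
    have hsV : V₀ * (κ * Real.sin α) ≤ 2 * β := (le_div_iff₀ hs).mp hV₀
    rcases hGnn.eq_or_lt with hG0 | hGpos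
    · have hc := hc₂ hG0.symm
      linarith
    · have hc := hc₁ hGpos
      linarith
  · intro hV₀
    have hsV : 2 * β ≤ V₀ * (κ * Real.sin α) := by
      have := (div_le_iff₀ hs).mp hV₀; linarith
    rcases hGnn.eq_or_lt with hG0 | hGpos
    · have hc := hc₂ hG0.symm
      linarith
    · have hc := hc₁ hGpos
      rcases hkey with h | h
      · linarith
      · rw [h, hGℓc] at hGpos; linarith
end

section
/- Under the hypotheses of the previous statement, if the initial inequalities are strict, a₁(0) < a₂(0) and b₁(0) < b₂(0), then a₁(t) < a₂(t) and b₁(t) < b₂(t) for all t > 0. -/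
open MeasureTheory Real Set Filter Topology intervalIntegral

/-- The set of points of `S ⊆ ℝ` that are not accumulation points of `S` is countable. -/
lemma countable_not_accPt (S : Set ℝ) : {x | x ∈ S ∧ ¬ AccPt x (Filter.principal S)}.Countable := by
  have hsub : {x | x ∈ S ∧ ¬ AccPt x (Filter.principal S)} ⊆
      ⋃ p : ℚ, ⋃ q : ℚ, {x | x ∈ S ∧ x ∈ Set.Ioo (p : ℝ) q ∧ Set.Ioo (p : ℝ) q ∩ S ⊆ {x}} := by
    rintro x ⟨hxS, hx⟩
    rw [accPt_iff_nhds] at hx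
    push_neg at hx
    obtain ⟨U, hU, hU2⟩ := hx
    obtain ⟨ε, hε, hball⟩ := Metric.mem_nhds_iff.1 hU
    obtain ⟨p, hp1, hp2⟩ := exists_rat_btwn (show x - ε < x by linarith)
    obtain ⟨q, hq1, hq2⟩ := exists_rat_btwn (show x < x + ε by linarith)
    refine Set.mem_iUnion.2 ⟨p, Set.mem_iUnion.2 ⟨q, hxS, ⟨hp2, hq1⟩, ?_⟩⟩
    rintro y ⟨hy1, hy2⟩
    have : y ∈ U := hball (by
      simp only [Metric.mem_ball, Real.dist_eq, abs_lt]
      obtain ⟨h1, h2⟩ := hy1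
      constructor <;> linarith)
    exact hU2 y ⟨this, hy2⟩
  refine Set.Countable.mono hsub ?_
  refine Set.countable_iUnion fun p => Set.countable_iUnion fun q => Set.Subsingleton.countable ?_
  rintro x ⟨_, hx2, hx3⟩ y ⟨hy1, hy2, _⟩
  exact (hx3 ⟨hy2, hy1⟩).symm

/-- Almost everywhere on a level set, the derivative vanishes. -/
lemma ae_deriv_eq_zero_level (h : ℝ → ℝ) (c : ℝ) :
    ∀ᵐ x, (h x = c ∧ DifferentiableAt ℝ h x) → deriv h x = 0 := by
  set S : Set ℝ := {x | h x = c} with hS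
  have hnull : (volume : Measure ℝ) {x | x ∈ S ∧ ¬ AccPt x (Filter.principal S)} = 0 :=
    (countable_not_accPt S).measure_zero _
  filter_upwards [measure_eq_zero_iff_ae_notMem.1 hnull] with x hx ⟨hxc, hdiff⟩
  have hacc : AccPt x (Filter.principal S) := by
    by_contra hA
    exact hx ⟨hxc, hA⟩
  -- the filter 𝓝[S \ {x}] x is nontrivial
  have hne : (nhdsWithin x (S \ {x})).NeBot := by
    rw [Set.diff_eq, Set.inter_comm, nhdsWithin_inter']
    exact hacc
  have h1 : Filter.Tendsto (slope h x) (nhdsWithin x (S \ {x})) (nhds (deriv h x)) :=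
    (hasDerivAt_iff_tendsto_slope.1 hdiff.hasDerivAt).mono_left
      (nhdsWithin_mono x (fun y hy => hy.2))
  have h2 : Filter.Tendsto (slope h x) (nhdsWithin x (S \ {x})) (nhds 0) := by
    refine Filter.Tendsto.congr' ?_ tendsto_const_nhds
    filter_upwards [self_mem_nhdsWithin] with y hy
    have : h y = c := hy.1
    simp [slope, this, hxc]
  exact tendsto_nhds_unique h1 h2



/-- A function that is `L`-Lipschitz in a neighborhood of every point of `Icc a b`
is `L`-Lipschitz on `Icc a b`. -/
lemma lipschitzOnWith_Icc_of_local {g : ℝ → ℝ} {L : NNReal} {a b : ℝ}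
    (hgc : Continuous g)
    (hloc : ∀ y ∈ Set.Icc a b, ∃ V, IsOpen V ∧ y ∈ V ∧ LipschitzOnWith L g V) :
    LipschitzOnWith L g (Set.Icc a b) := by
  rw [lipschitzOnWith_iff_dist_le_mul]
  -- suffices for u ≤ v
  have key : ∀ u ∈ Set.Icc a b, ∀ v ∈ Set.Icc a b, u ≤ v → dist (g v) (g u) ≤ L * (v - u) := by
    intro u hu v hv huv
    set s : Set ℝ := {w | dist (g w) (g u) ≤ L * (w - u)} with hs
    have hsub : Set.Icc u v ⊆ s := by
      apply IsClosed.Icc_subset_of_forall_exists_gt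
      · exact ((isClosed_le (by fun_prop) (by fun_prop)).inter isClosed_Icc)
      · simp [hs]
      · rintro w ⟨hw1, hw2⟩ z hz
        obtain ⟨V, hVopen, hwV, hVlip⟩ := hloc w ⟨le_trans hu.1 hw2.1, le_trans hw2.2.le hv.2⟩
        obtain ⟨ε, hε, hball⟩ := Metric.isOpen_iff.1 hVopen w hwV
        set w' := min z (w + ε / 2) with hw'
        have hw'V : w' ∈ V := hball (by
          simp only [Metric.mem_ball, Real.dist_eq, abs_lt]
          constructor
          · have : w < w' := lt_min hz.out (by linarith)
            linarith
          · have : w' ≤ w + ε / 2 := min_le_right _ _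
            linarith)
        refine ⟨w', ⟨?_, lt_min hz.out (by linarith), min_le_left _ _⟩⟩
        have hww' : w ≤ w' := (lt_min hz.out (by linarith)).le
        calc dist (g w') (g u) ≤ dist (g w') (g w) + dist (g w) (g u) := dist_triangle _ _ _
          _ ≤ L * (w' - w) + L * (w - u) := by
              refine add_le_add ?_ hw1
              have := lipschitzOnWith_iff_dist_le_mul.1 hVlip w' hw'V w hwV
              simpa [Real.dist_eq, abs_of_nonneg (by linarith : (0:ℝ) ≤ w' - w)] using this
          _ = L * (w' - u) := by ring
    exact hsub ⟨huv, le_rfl⟩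
  intro x hx y hy
  rcases le_total x y with h | h
  · have h1 := key x hx y hy h
    have hd : dist y x = y - x := by
      rw [Real.dist_eq, abs_of_nonneg (by linarith : (0:ℝ) ≤ y - x)]
    rw [dist_comm (g x) (g y), dist_comm x y, hd]
    exact h1
  · have h1 := key y hy x hx h
    have hd : dist x y = x - y := by
      rw [Real.dist_eq, abs_of_nonneg (by linarith : (0:ℝ) ≤ x - y)]
    rw [hd]
    exact h1

/-- A locally Lipschitz function is Lipschitz on each compact interval. -/
lemma LocallyLipschitz.exists_lipschitzOnWith_Icc {g : ℝ → ℝ} (hg : LocallyLipschitz g)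
    (a b : ℝ) : ∃ L : NNReal, LipschitzOnWith L g (Set.Icc a b) := by
  have hcont := LocallyLipschitz.continuous hg
  choose K t ht hK using hg
  have hUnhds : ∀ x ∈ Set.Icc a b, interior (t x) ∈ nhds x := fun x _ =>
    interior_mem_nhds.2 (ht x)
  obtain ⟨F, hF⟩ := isCompact_Icc.elim_nhds_subcover (fun x => interior (t x)) hUnhds
  set L : NNReal := F.sup K with hL
  refine ⟨L, lipschitzOnWith_Icc_of_local hcont ?_⟩
  intro y hy
  obtain ⟨x, hxF, hyx⟩ := Set.mem_iUnion₂.1 (hF.2 hy)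
  exact ⟨interior (t x), isOpen_interior, hyx,
    fun p hp q hq => le_trans ((hK x) (interior_subset hp) (interior_subset hq)) (mul_le_mul_left (ENNReal.coe_le_coe.2 (Finset.le_sup hxF)) _)⟩

/-- A locally Lipschitz real function is differentiable almost everywhere. -/
lemma LocallyLipschitz.ae_differentiableAt {g : ℝ → ℝ} (hg : LocallyLipschitz g) :
    ∀ᵐ x, DifferentiableAt ℝ g x := by
  have main : ∀ n : ℕ, ∀ᵐ x, x ∈ Set.Ioo (-(n : ℝ) - 1) ((n : ℝ) + 1) → DifferentiableAt ℝ g x := by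
    intro n
    obtain ⟨L, hL⟩ := hg.exists_lipschitzOnWith_Icc (-(n : ℝ) - 1) ((n : ℝ) + 1)
    obtain ⟨G, hGlip, hGeq⟩ := hL.extend_real
    filter_upwards [hGlip.ae_differentiableAt (μ := volume)] with x hx hmem
    have hev : g =ᶠ[nhds x] G := by
      filter_upwards [Ioo_mem_nhds hmem.1 hmem.2] with y hy
      exact hGeq ⟨hy.1.le, hy.2.le⟩
    exact hx.congr_of_eventuallyEq hev
  filter_upwards [MeasureTheory.ae_all_iff.2 main] with x hx
  obtain ⟨n, hn⟩ : ∃ n : ℕ, |x| < (n : ℝ) + 1 := exists_nat_gt |x| |>.imp fun n h => by linarith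
  exact hx n ⟨by cases abs_lt.1 hn with | intro h1 h2 => linarith, (abs_lt.1 hn).2⟩


/-- slope composed with a positive sequence tending to 0. -/
private lemma tendsto_slope_seq {h : ℝ → ℝ} {d t : ℝ}
    (hd : HasDerivAt h d t) :
    Tendsto (fun n : ℕ => (h (t + 1 / ((n : ℝ) + 1)) - h t) * ((n : ℝ) + 1)) atTop (𝓝 d) := by
  have hslope := hasDerivAt_iff_tendsto_slope.1 hd
  have hu : Tendsto (fun n : ℕ => t + 1 / ((n : ℝ) + 1)) atTop (𝓝[≠] t) := by
    rw [tendsto_nhdsWithin_iff]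
    constructor
    · have := tendsto_one_div_add_atTop_nhds_zero_nat (𝕜 := ℝ)
      have h2 : Tendsto (fun n : ℕ => t + 1 / ((n : ℝ) + 1)) atTop (𝓝 (t + 0)) :=
        tendsto_const_nhds.add this
      simpa using h2
    · filter_upwards with n
      have : (0:ℝ) < 1 / ((n : ℝ) + 1) := by positivity
      simp only [Set.mem_compl_iff, Set.mem_singleton_iff]
      intro hcon
      nlinarith [hcon]
  have := hslope.comp hu
  refine this.congr fun n => ?_
  have hpos : (0:ℝ) < 1 / ((n : ℝ) + 1) := by positivity
  simp only [Function.comp, slope_def_field]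
  field_simp
  ring

/-- Fundamental theorem of calculus for Lipschitz functions. -/
lemma LipschitzWith.sub_eq_integral_deriv {h : ℝ → ℝ} {L : NNReal} (hh : LipschitzWith L h)
    {x y : ℝ} (hxy : x ≤ y) : h y - h x = ∫ t in Set.Ioc x y, deriv h t := by
  have hcont : Continuous h := hh.continuous
  set u : ℕ → ℝ := fun n => 1 / ((n : ℝ) + 1) with hu_def
  have hupos : ∀ n, 0 < u n := fun n => by positivity
  set F : ℕ → ℝ → ℝ := fun n t => (h (t + u n) - h t) * ((n : ℝ) + 1) with hF_def
  -- dominated convergence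
  have hDCT : Tendsto (fun n => ∫ t in Set.Ioc x y, F n t) atTop
      (𝓝 (∫ t in Set.Ioc x y, deriv h t)) := by
    apply MeasureTheory.tendsto_integral_of_dominated_convergence (fun _ => (L : ℝ))
    · intro n
      exact ((hcont.comp (continuous_id.add continuous_const)).sub hcont).mul
        continuous_const |>.aestronglyMeasurable
    · exact MeasureTheory.integrableOn_const measure_Ioc_lt_top.ne
    · intro n
      filter_upwards with t
      have h1 : |h (t + u n) - h t| ≤ L * u n := by
        have := hh.dist_le_mul (t + u n) t
        rw [Real.dist_eq, Real.dist_eq] at this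
        simpa [abs_of_pos (hupos n)] using this
      have h2 : ((n:ℝ)+1) = (u n)⁻¹ := by simp [hu_def]
      rw [Real.norm_eq_abs, hF_def]
      simp only []
      rw [abs_mul, abs_of_pos (by positivity : (0:ℝ) < (n:ℝ)+1)]
      calc |h (t + u n) - h t| * ((n:ℝ)+1) ≤ (L * u n) * ((n:ℝ)+1) := by
            apply mul_le_mul_of_nonneg_right h1 (by positivity)
        _ = L := by rw [h2]; field_simp [ne_of_gt (hupos n)]
    · have := hh.ae_differentiableAt (μ := (volume : Measure ℝ))
      exact MeasureTheory.ae_restrict_of_ae (this.mono fun t ht => tendsto_slope_seq ht.hasDerivAt)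
  -- explicit computation of the integrals
  have hInt : ∀ n, ∫ t in Set.Ioc x y, F n t =
      ((∫ s in y..(y + u n), h s) - ∫ s in x..(x + u n), h s) * ((n : ℝ) + 1) := by
    intro n
    have hIcomp : ∀ a b : ℝ, IntervalIntegrable h volume a b := fun a b =>
      hcont.intervalIntegrable a b
    have e0 : ∫ t in Set.Ioc x y, F n t = ∫ t in x..y, F n t :=
      (intervalIntegral.integral_of_le hxy).symm
    have e1 : ∫ t in x..y, F n t
        = ((∫ t in x..y, h (t + u n)) - ∫ t in x..y, h t) * ((n : ℝ) + 1) := by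
      rw [intervalIntegral.integral_mul_const]
      congr 1
      exact intervalIntegral.integral_sub ((hcont.comp (continuous_id.add
        continuous_const)).intervalIntegrable x y) (hIcomp x y)
    have e2 : ∫ t in x..y, h (t + u n) = ∫ t in (x + u n)..(y + u n), h t :=
      intervalIntegral.integral_comp_add_right h (u n)
    have I1 : (∫ s in x..(x + u n), h s) + ∫ s in (x + u n)..(y + u n), h s
        = ∫ s in x..(y + u n), h s :=
      intervalIntegral.integral_add_adjacent_intervals (hIcomp _ _) (hIcomp _ _)
    have I2 : (∫ s in x..y, h s) + ∫ s in y..(y + u n), h s = ∫ s in x..(y + u n), h s :=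
      intervalIntegral.integral_add_adjacent_intervals (hIcomp _ _) (hIcomp _ _)
    rw [e0, e1, e2]
    have : (∫ t in (x + u n)..(y + u n), h t) - ∫ t in x..y, h t
        = (∫ s in y..(y + u n), h s) - ∫ s in x..(x + u n), h s := by linarith
    rw [this]
  -- limit of the right-hand side
  have hlim : Tendsto (fun n => ((∫ s in y..(y + u n), h s) - ∫ s in x..(x + u n), h s)
      * ((n : ℝ) + 1)) atTop (𝓝 (h y - h x)) := by
    have hP : ∀ z : ℝ, Tendsto (fun n => (∫ s in z..(z + u n), h s) * ((n : ℝ) + 1))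
        atTop (𝓝 (h z)) := by
      intro z
      have hder : HasDerivAt (fun w => ∫ s in z..w, h s) (h z) z :=
        intervalIntegral.integral_hasDerivAt_right (hcont.intervalIntegrable z z)
          (hcont.stronglyMeasurableAtFilter volume (𝓝 z)) hcont.continuousAt
      have := tendsto_slope_seq hder
      refine this.congr fun n => ?_
      simp [intervalIntegral.integral_same, hu_def, one_div]
    have := (hP y).sub (hP x)
    refine this.congr fun n => by ring
  simp only [hInt] at hDCT
  exact (tendsto_nhds_unique hDCT hlim).symm



/-- A locally Lipschitz function with a.e. nonpositive derivative on `Ioo x y` is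
nonincreasing from `x` to `y`. -/
lemma le_of_deriv_nonpos_ae {g : ℝ → ℝ} (hg : LocallyLipschitz g) {x y : ℝ} (hxy : x ≤ y)
    (hd : ∀ᵐ t, t ∈ Set.Ioo x y → deriv g t ≤ 0) : g y ≤ g x := by
  obtain ⟨L, hL⟩ := hg.exists_lipschitzOnWith_Icc x y
  obtain ⟨G, hGlip, hGeq⟩ := hL.extend_real
  have hftc : G y - G x = ∫ t in Set.Ioc x y, deriv G t := hGlip.sub_eq_integral_deriv hxy
  have hint : (∫ t in Set.Ioc x y, deriv G t) ≤ 0 := by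
    apply MeasureTheory.integral_nonpos_of_ae
    have h1 : ∀ᵐ t ∂(volume.restrict (Set.Ioc x y)), t ∈ Set.Ioc x y :=
      MeasureTheory.ae_restrict_mem measurableSet_Ioc
    have h2 : ∀ᵐ t ∂(volume.restrict (Set.Ioc x y)), t ≠ y := by
      refine MeasureTheory.ae_restrict_of_ae ?_
      have : (volume : Measure ℝ) {y} = 0 := measure_singleton y
      filter_upwards [measure_eq_zero_iff_ae_notMem.1 this] with t ht
      simpa using ht
    filter_upwards [h1, h2, MeasureTheory.ae_restrict_of_ae hd] with t ht hty htd
    have htIoo : t ∈ Set.Ioo x y := ⟨ht.1, lt_of_le_of_ne ht.2 hty⟩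
    have hev : G =ᶠ[nhds t] g := by
      filter_upwards [Ioo_mem_nhds htIoo.1 htIoo.2] with s hs
      exact (hGeq ⟨hs.1.le, hs.2.le⟩).symm
    have : deriv G t = deriv g t := hev.deriv_eq
    rw [Pi.zero_apply, this]
    exact htd htIoo
  have hGy : G y = g y := (hGeq ⟨hxy, le_rfl⟩).symm
  have hGx : G x = g x := (hGeq ⟨le_rfl, hxy⟩).symm
  rw [hGy, hGx] at hftc
  linarith [hftc, hint]

/-- Derivative of a max equals derivative of the active branch. -/
lemma deriv_max_eq_left {u v : ℝ → ℝ} {t : ℝ} (hu : DifferentiableAt ℝ u t)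
    (hm : DifferentiableAt ℝ (fun s => max (u s) (v s)) t) (h : v t ≤ u t) :
    deriv (fun s => max (u s) (v s)) t = deriv u t := by
  have hmin : IsLocalMin (fun s => max (u s) (v s) - u s) t := by
    refine Filter.Eventually.of_forall fun s => ?_
    simp only [max_eq_left h, sub_self]
    exact sub_nonneg.2 (le_max_left _ _)
  have h0 : deriv (fun s => max (u s) (v s) - u s) t = 0 := hmin.deriv_eq_zero
  rw [deriv_fun_sub hm hu] at h0
  linarith

lemma deriv_max_eq_right {u v : ℝ → ℝ} {t : ℝ} (hv : DifferentiableAt ℝ v t)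
    (hm : DifferentiableAt ℝ (fun s => max (u s) (v s)) t) (h : u t ≤ v t) :
    deriv (fun s => max (u s) (v s)) t = deriv v t := by
  have hcomm : (fun s => max (u s) (v s)) = fun s => max (v s) (u s) := by
    funext s; exact max_comm _ _
  rw [hcomm] at hm ⊢
  exact deriv_max_eq_left hv hm h


/-- Strict comparison principle for the endpoint dynamics. -/
theorem stmt_12 (K : NNReal) (ℓc : ℝ) (G H β : ℝ → ℝ)
    (a₁ b₁ a₂ b₂ : ℝ → ℝ)
    (hℓc : 0 < ℓc)
    (hGanti : AntitoneOn G (Set.Ioi 0)) (hHanti : AntitoneOn H (Set.Ioi 0))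
    (hGc : ContinuousOn G (Set.Ioi 0)) (hHc : ContinuousOn H (Set.Ioi 0))
    (hβ : LipschitzWith K β)
    (hla₁ : LocallyLipschitz a₁) (hlb₁ : LocallyLipschitz b₁)
    (hla₂ : LocallyLipschitz a₂) (hlb₂ : LocallyLipschitz b₂)
    (hpos₁ : ∀ t ≥ 0, 0 < b₁ t - a₁ t) (hpos₂ : ∀ t ≥ 0, 0 < b₂ t - a₂ t)
    (hdyn₁ : ∀ᵐ t ∂(volume.restrict (Set.Ici (0 : ℝ))),
      min (deriv a₁ t + G (b₁ t - a₁ t) - β (a₁ t)) (ℓc - (b₁ t - a₁ t)) = 0 ∧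
        deriv b₁ t = H (b₁ t - a₁ t) - β (b₁ t))
    (hdyn₂ : ∀ᵐ t ∂(volume.restrict (Set.Ici (0 : ℝ))),
      min (deriv a₂ t + G (b₂ t - a₂ t) - β (a₂ t)) (ℓc - (b₂ t - a₂ t)) = 0 ∧
        deriv b₂ t = H (b₂ t - a₂ t) - β (b₂ t))
    (ha0 : a₁ 0 < a₂ 0) (hb0 : b₁ 0 < b₂ 0) :
    ∀ t > 0, a₁ t < a₂ t ∧ b₁ t < b₂ t := by
  set f : ℝ → ℝ := fun t => max (a₁ t - a₂ t) (b₁ t - b₂ t) with hf_def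
  have hfl : LocallyLipschitz f := (hla₁.sub hla₂).max (hlb₁.sub hlb₂)
  have hdyn₁' := (MeasureTheory.ae_restrict_iff' measurableSet_Ici).1 hdyn₁
  have hdyn₂' := (MeasureTheory.ae_restrict_iff' measurableSet_Ici).1 hdyn₂
  -- the key differential inequality
  have hkey : ∀ᵐ t : ℝ, (0 < t ∧ f t < 0) → deriv f t + K * f t ≤ 0 := by
    filter_upwards [hdyn₁', hdyn₂', hla₁.ae_differentiableAt, hlb₁.ae_differentiableAt,
      hla₂.ae_differentiableAt, hlb₂.ae_differentiableAt, hfl.ae_differentiableAt,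
      ae_deriv_eq_zero_level (fun s => b₁ s - a₁ s) ℓc,
      ae_deriv_eq_zero_level (fun s => b₂ s - a₂ s) ℓc]
      with t hd1 hd2 hda₁ hdb₁ hda₂ hdb₂ hdf hl₁ hl₂ hth
    obtain ⟨ht0, htf⟩ := hth
    obtain ⟨hmin1, hB1⟩ := hd1 ht0.le
    obtain ⟨hmin2, hB2⟩ := hd2 ht0.le
    have hp1 : 0 < b₁ t - a₁ t := hpos₁ t ht0.le
    have hp2 : 0 < b₂ t - a₂ t := hpos₂ t ht0.le
    have hℓ1c : b₁ t - a₁ t ≤ ℓc := by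
      have h := min_le_right (deriv a₁ t + G (b₁ t - a₁ t) - β (a₁ t)) (ℓc - (b₁ t - a₁ t))
      rw [hmin1] at h; linarith
    have hℓ2c : b₂ t - a₂ t ≤ ℓc := by
      have h := min_le_right (deriv a₂ t + G (b₂ t - a₂ t) - β (a₂ t)) (ℓc - (b₂ t - a₂ t))
      rw [hmin2] at h; linarith
    have hA2 : β (a₂ t) - G (b₂ t - a₂ t) ≤ deriv a₂ t := by
      have h := min_le_left (deriv a₂ t + G (b₂ t - a₂ t) - β (a₂ t)) (ℓc - (b₂ t - a₂ t))
      rw [hmin2] at h; linarith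
    have hβlip : ∀ p q : ℝ, β p - β q ≤ K * |p - q| := by
      intro p q
      have h := hβ.dist_le_mul p q
      rw [Real.dist_eq, Real.dist_eq] at h
      calc β p - β q ≤ |β p - β q| := le_abs_self _
        _ ≤ K * |p - q| := h
    rcases le_total (b₁ t - b₂ t) (a₁ t - a₂ t) with hvu | huv
    · -- the a-difference is active
      have hfu : f t = a₁ t - a₂ t := max_eq_left hvu
      have hfd : deriv f t = deriv (fun s => a₁ s - a₂ s) t :=
        deriv_max_eq_left (hda₁.sub hda₂) hdf hvu
      have hderivu : deriv (fun s => a₁ s - a₂ s) t = deriv a₁ t - deriv a₂ t :=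
        deriv_sub hda₁ hda₂
      have hℓ12 : b₁ t - a₁ t ≤ b₂ t - a₂ t := by linarith
      have ha12 : a₁ t - a₂ t < 0 := by rw [← hfu]; exact htf
      have hβa : β (a₁ t) - β (a₂ t) ≤ K * (a₂ t - a₁ t) := by
        have h := hβlip (a₁ t) (a₂ t)
        rwa [abs_of_neg (by linarith : a₁ t - a₂ t < 0), neg_sub] at h
      rcases eq_or_lt_of_le hℓ1c with heq | hlt
      · -- the length is critical
        have hl2eq : b₂ t - a₂ t = ℓc := le_antisymm hℓ2c (by linarith)
        have hz1 : deriv (fun s => b₁ s - a₁ s) t = 0 := hl₁ ⟨heq, hdb₁.sub hda₁⟩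
        have hz2 : deriv (fun s => b₂ s - a₂ s) t = 0 := hl₂ ⟨hl2eq, hdb₂.sub hda₂⟩
        rw [deriv_fun_sub hdb₁ hda₁] at hz1
        rw [deriv_fun_sub hdb₂ hda₂] at hz2
        have huveq : a₁ t - a₂ t = b₁ t - b₂ t := by linarith
        have hb12 : b₁ t - b₂ t < 0 := by linarith
        have hβb : β (b₂ t) - β (b₁ t) ≤ K * (b₂ t - b₁ t) := by
          have h := hβlip (b₂ t) (b₁ t)
          rwa [abs_of_pos (by linarith : 0 < b₂ t - b₁ t)] at h
        have hH : H (b₁ t - a₁ t) = H (b₂ t - a₂ t) := by rw [heq, hl2eq]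
        have hKe : (K : ℝ) * (a₁ t - a₂ t) = (K : ℝ) * (b₁ t - b₂ t) := by rw [huveq]
        rw [hfd, hderivu, hfu]
        linarith [hB1, hB2, hH, hβb, hKe]
      · -- the length is subcritical, the a-equation is saturated
        have hA1 : deriv a₁ t = β (a₁ t) - G (b₁ t - a₁ t) := by
          rcases min_eq_iff.1 hmin1 with ⟨h1, _⟩ | ⟨h1, _⟩
          · linarith
          · exfalso; linarith
        have hG : G (b₂ t - a₂ t) ≤ G (b₁ t - a₁ t) :=
          hGanti (Set.mem_Ioi.2 hp1) (Set.mem_Ioi.2 hp2) hℓ12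
        rw [hfd, hderivu, hfu]
        linarith [hA1, hA2, hβa, hG]
    · -- the b-difference is active
      have hfv : f t = b₁ t - b₂ t := max_eq_right huv
      have hfd : deriv f t = deriv (fun s => b₁ s - b₂ s) t :=
        deriv_max_eq_right (hdb₁.sub hdb₂) hdf huv
      have hderivv : deriv (fun s => b₁ s - b₂ s) t = deriv b₁ t - deriv b₂ t :=
        deriv_sub hdb₁ hdb₂
      have hℓ21 : b₂ t - a₂ t ≤ b₁ t - a₁ t := by linarith
      have hH : H (b₁ t - a₁ t) ≤ H (b₂ t - a₂ t) :=
        hHanti (Set.mem_Ioi.2 hp2) (Set.mem_Ioi.2 hp1) hℓ21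
      have hb12 : b₁ t - b₂ t < 0 := by rw [← hfv]; exact htf
      have hβb : β (b₂ t) - β (b₁ t) ≤ K * (b₂ t - b₁ t) := by
        have h := hβlip (b₂ t) (b₁ t)
        rwa [abs_of_pos (by linarith : 0 < b₂ t - b₁ t)] at h
      rw [hfd, hderivv, hfv]
      linarith [hB1, hB2, hH, hβb]
  -- no crossing: f stays negative on [0, ∞)
  have main : ∀ t : ℝ, 0 ≤ t → f t < 0 := by
    by_contra hcon
    push_neg at hcon
    obtain ⟨t₁, ht₁0, ht₁f⟩ := hcon
    set A : Set ℝ := {t | 0 ≤ t ∧ 0 ≤ f t} with hA_def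
    have hAne : A.Nonempty := ⟨t₁, ht₁0, ht₁f⟩
    have hAbdd : BddBelow A := ⟨0, fun s hs => hs.1⟩
    have hfc : Continuous f := hfl.continuous
    have hAclosed : IsClosed A := by
      have : A = {t : ℝ | 0 ≤ t} ∩ {t : ℝ | 0 ≤ f t} := by
        ext s; simp [hA_def]
      rw [this]
      exact (isClosed_le continuous_const continuous_id).inter
        (isClosed_le continuous_const hfc)
    set t₀ := sInf A with ht₀_def
    have ht₀A : t₀ ∈ A := hAclosed.csInf_mem hAne hAbdd
    have hf0 : f 0 < 0 := max_lt (by linarith) (by linarith)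
    have ht₀pos : 0 < t₀ := by
      rcases lt_or_eq_of_le ht₀A.1 with h | h
      · exact h
      · exfalso; rw [← h] at ht₀A; linarith [ht₀A.2]
    have hbefore : ∀ s, 0 ≤ s → s < t₀ → f s < 0 := by
      intro s hs0 hst
      by_contra hcon2
      push_neg at hcon2
      exact absurd (csInf_le hAbdd ⟨hs0, hcon2⟩) (not_le.2 hst)
    set g : ℝ → ℝ := fun t => Real.exp ((K : ℝ) * t) * f t with hg_def
    have hgl : LocallyLipschitz g := by
      have h1 : ContDiff ℝ 1 (fun t : ℝ => Real.exp ((K : ℝ) * t)) :=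
        Real.contDiff_exp.comp (contDiff_const.mul contDiff_id)
      have hmul : ContDiff ℝ 1 (fun p : ℝ × ℝ => p.1 * p.2) := contDiff_fst.mul contDiff_snd
      exact hmul.locallyLipschitz.comp (h1.locallyLipschitz.prodMk hfl)
    have hgd : ∀ᵐ t : ℝ, t ∈ Set.Ioo 0 t₀ → deriv g t ≤ 0 := by
      filter_upwards [hkey, hfl.ae_differentiableAt] with t hk hdft ht
      have hft : f t < 0 := hbefore t ht.1.le ht.2
      have hineq := hk ⟨ht.1, hft⟩
      have hexp : HasDerivAt (fun s : ℝ => Real.exp ((K : ℝ) * s))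
          ((K : ℝ) * Real.exp ((K : ℝ) * t)) t := by
        have h1 : HasDerivAt (fun s : ℝ => (K : ℝ) * s) ((K : ℝ) * 1) t :=
          (hasDerivAt_id t).const_mul (K : ℝ)
        have h3 := h1.exp
        have he : Real.exp ((K : ℝ) * t) * ((K : ℝ) * 1) = (K : ℝ) * Real.exp ((K : ℝ) * t) := by
          ring
        rwa [he] at h3
      have hgder : HasDerivAt g
          ((K : ℝ) * Real.exp ((K : ℝ) * t) * f t + Real.exp ((K : ℝ) * t) * deriv f t) t :=
        hexp.mul hdft.hasDerivAt
      rw [hgder.deriv]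
      have hep := Real.exp_pos ((K : ℝ) * t)
      nlinarith [hineq, hep]
    have hg0 : g t₀ ≤ g 0 := le_of_deriv_nonpos_ae hgl ht₀pos.le hgd
    have hg0' : g 0 = f 0 := by simp [hg_def]
    have hgt₀ : (0 : ℝ) ≤ g t₀ := mul_nonneg (Real.exp_pos _).le ht₀A.2
    linarith
  intro t ht
  constructor
  · linarith [le_max_left (a₁ t - a₂ t) (b₁ t - b₂ t), main t ht.le]
  · linarith [le_max_right (a₁ t - a₂ t) (b₁ t - b₂ t), main t ht.le]
end

section
/- Let β : ℝ → ℝ be continuous, 1-periodic, and let q ∈ [min β, max β]. Then every solution x(t) of x'(t) = q - β(x(t)) satisfies x(t) ∈ [x(0) - 1, x(0) + 1] for all t ≥ 0; in particular the effective speed lim_{t→∞} (x(t) - x(0))/t equals 0. -/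
open Real Set Filter Topology

/-- Barrier lemma: if `β c ≤ q` and `x 0 ≥ c`, then any solution of `x' = q - β x`
stays above `c` for `t ≥ 0`. -/
lemma stmt_13_barrier (β : ℝ → ℝ) (K : NNReal) (q c : ℝ) (x : ℝ → ℝ)
    (hβl : LipschitzWith K β) (hc : β c ≤ q) (h0 : c ≤ x 0)
    (hx : ∀ t ≥ 0, HasDerivAt x (q - β (x t)) t) :
    ∀ t ≥ 0, c ≤ x t := by
  intro t₀ ht₀
  by_contra hcon
  push_neg at hcon
  have hxc : ContinuousOn x (Icc 0 t₀) := fun t ht =>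
    ((hx t ht.1).continuousAt).continuousWithinAt
  set S : Set ℝ := Icc 0 t₀ ∩ x ⁻¹' Ici c with hS
  have hScl : IsClosed S := hxc.preimage_isClosed_of_isClosed isClosed_Icc isClosed_Ici
  have hSne : S.Nonempty := ⟨0, ⟨le_refl 0, ht₀⟩, h0⟩
  have hSbdd : BddAbove S := ⟨t₀, fun t ht => ht.1.2⟩
  set t₁ := sSup S with ht₁def
  have ht₁S : t₁ ∈ S := hScl.csSup_mem hSne hSbdd
  have ht₁0 : 0 ≤ t₁ := ht₁S.1.1
  have ht₁t₀ : t₁ ≤ t₀ := ht₁S.1.2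
  have hxt₁ : c ≤ x t₁ := ht₁S.2
  have ht₁lt : t₁ < t₀ := by
    rcases lt_or_eq_of_le ht₁t₀ with h | h
    · exact h
    · exact absurd (h ▸ hxt₁) (not_le.2 hcon)
  -- points strictly beyond t₁ have x t < c
  have hlt : ∀ t ∈ Ioc t₁ t₀, x t < c := by
    intro t ht
    by_contra h
    push_neg at h
    have : t ∈ S := ⟨⟨le_trans ht₁0 ht.1.le, ht.2⟩, h⟩
    exact absurd (le_csSup hSbdd this) (not_le.2 ht.1)
  -- x t₁ ≤ c by continuity from the right
  have hxt₁le : x t₁ ≤ c := by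
    have hcont : Tendsto x (𝓝[>] t₁) (𝓝 (x t₁)) :=
      ((hx t₁ ht₁0).continuousAt).continuousWithinAt
    have hev : ∀ᶠ t in 𝓝[>] t₁, x t ≤ c := by
      filter_upwards [Ioc_mem_nhdsGT_of_mem ⟨le_refl t₁, ht₁lt⟩] with t ht
      exact (hlt t ht).le
    exact le_of_tendsto hcont hev
  have hxt₁eq : x t₁ = c := le_antisymm hxt₁le hxt₁
  have hxle : ∀ t ∈ Ico t₁ t₀, x t ≤ c := by
    intro t ht
    rcases eq_or_lt_of_le ht.1 with h | h
    · rw [← h]; exact hxt₁le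
    · exact (hlt t ⟨h, ht.2.le⟩).le
  -- Grönwall on [t₁, t₀] for f t = c - x t
  have key : ∀ s ∈ Icc t₁ t₀, c - x s ≤ gronwallBound 0 K 0 (s - t₁) := by
    apply le_gronwallBound_of_liminf_deriv_right_le
      (f' := fun t => β (x t) - q)
    · exact (continuousOn_const.sub (hxc.mono (Icc_subset_Icc_left ht₁0)))
    · intro t ht r hr
      have hd : HasDerivWithinAt (fun t => c - x t) (β (x t) - q) (Ici t) t := by
        have := ((hx t (le_trans ht₁0 ht.1)).const_sub c).hasDerivWithinAt (s := Ici t)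
        rwa [neg_sub] at this
      have := hd.liminf_right_slope_le hr
      apply this.mono
      intro z hz
      rwa [slope_def_field, div_eq_inv_mul] at hz
    · rw [hxt₁eq]; simp
    · intro t ht
      have h1 : x t ≤ c := hxle t ht
      have h2 : β (x t) - β c ≤ K * (c - x t) := by
        calc β (x t) - β c ≤ |β (x t) - β c| := le_abs_self _
          _ ≤ K * |x t - c| := by
              have := hβl.dist_le_mul (x t) c
              rwa [Real.dist_eq, Real.dist_eq] at this
          _ = K * (c - x t) := by rw [abs_of_nonpos (by linarith)]; ring
      have : β (x t) - q ≤ β (x t) - β c := by linarith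
      calc β (x t) - q ≤ K * (c - x t) := le_trans this h2
        _ ≤ K * (c - x t) + 0 := by linarith
  have := key t₀ ⟨ht₁t₀, le_refl t₀⟩
  rw [gronwallBound_ε0_δ0] at this
  linarith

/-- Pinning: for q in [min β, max β] any solution of x' = q - β(x) is trapped and has
zero effective speed. -/
theorem stmt_13 (β : ℝ → ℝ) (K : NNReal) (q : ℝ) (x : ℝ → ℝ)
    (hβc : Continuous β) (hβl : LipschitzWith K β) (hper : Function.Periodic β 1)
    (hq₁ : ∃ s, β s ≤ q) (hq₂ : ∃ s, q ≤ β s)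
    (hx : ∀ t ≥ 0, HasDerivAt x (q - β (x t)) t) :
    (∀ t ≥ 0, x t ∈ Set.Icc (x 0 - 1) (x 0 + 1)) ∧
      Filter.Tendsto (fun t => (x t - x 0) / t) Filter.atTop (nhds 0) := by
  obtain ⟨s₁, hs₁⟩ := hq₁
  obtain ⟨s₂, hs₂⟩ := hq₂
  -- lower barrier point c ∈ [x 0 - 1, x 0]
  set c : ℝ := s₁ - ⌈s₁ - x 0⌉ with hcdef
  have hβceq : β c = β s₁ := by
    have := hper.sub_int_mul_eq (x := s₁) ⌈s₁ - x 0⌉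
    simpa using this
  have hcle : c ≤ x 0 := by
    have := Int.le_ceil (s₁ - x 0)
    simp only [hcdef]; linarith
  have hcge : x 0 - 1 ≤ c := by
    have := Int.ceil_lt_add_one (s₁ - x 0)
    simp only [hcdef]; linarith
  have hlow : ∀ t ≥ 0, c ≤ x t :=
    stmt_13_barrier β K q c x hβl (hβceq ▸ hs₁) hcle hx
  -- upper barrier via reflection
  set d : ℝ := s₂ - ⌈s₂ - (x 0 + 1)⌉ with hddef
  have hβdeq : β d = β s₂ := by
    have := hper.sub_int_mul_eq (x := s₂) ⌈s₂ - (x 0 + 1)⌉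
    simpa using this
  have hdle : d ≤ x 0 + 1 := by
    have := Int.le_ceil (s₂ - (x 0 + 1))
    simp only [hddef]; linarith
  have hdge : x 0 ≤ d := by
    have := Int.ceil_lt_add_one (s₂ - (x 0 + 1))
    simp only [hddef]; linarith
  have hhigh : ∀ t ≥ 0, x t ≤ d := by
    have hβ'l : LipschitzWith K (fun u => -β (-u)) := by
      have h1 : LipschitzWith 1 (fun u : ℝ => -u) := LipschitzWith.id.neg
      have := h1.comp (hβl.comp h1)
      simpa [Function.comp_def] using this
    have hkey := stmt_13_barrier (fun u => -β (-u)) K (-q) (-d) (fun t => -x t)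
      hβ'l (by simp; exact hβdeq ▸ hs₂) (by simpa using hdge) ?_
    · intro t ht
      have := hkey t ht
      linarith
    · intro t ht
      have := (hx t ht).neg
      simp only [neg_neg, sub_neg_eq_add, neg_add_eq_sub]
      rw [neg_sub] at this
      exact this
  constructor
  · intro t ht
    exact ⟨le_trans hcge (hlow t ht), le_trans (hhigh t ht) hdle⟩
  · have hbound : ∀ᶠ t in atTop, ‖(x t - x 0) / t‖ ≤ 2 / t := by
      filter_upwards [eventually_ge_atTop (1 : ℝ)] with t ht
      have ht0 : (0 : ℝ) < t := lt_of_lt_of_le one_pos ht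
      have h1 := hlow t ht0.le
      have h2 := hhigh t ht0.le
      rw [norm_div, Real.norm_eq_abs, Real.norm_eq_abs, abs_of_pos ht0,
        div_le_div_iff_of_pos_right ht0]
      rw [abs_le]
      constructor <;> linarith
    have h2t : Tendsto (fun t : ℝ => 2 / t) atTop (nhds 0) :=
      tendsto_const_nhds.div_atTop tendsto_id
    exact squeeze_zero_norm' hbound h2t
end

section
/- Let β : ℝ → ℝ be Lipschitz and 1-periodic, and let q > max β. Then the solution of x'(t) = q - β(x(t)) with x(0) = 0 is strictly increasing with x'(t) ≥ q - max β > 0, there is a unique t_c > 0 with x(t_c) = 1, the solution satisfies x(t + t_c) = x(t) + 1 for all t, and lim_{t→∞} x(t)/t = 1/t_c. -/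
open Real Set Filter

/-- Global uniqueness for autonomous Lipschitz ODE on ℝ. -/
lemma ode_uniq_aux (v : ℝ → ℝ) (K' : NNReal) (hv : LipschitzWith K' v)
    (f g : ℝ → ℝ) (hf : ∀ t, HasDerivAt f (v (f t)) t)
    (hg : ∀ t, HasDerivAt g (v (g t)) t) (h0 : f 0 = g 0) : ∀ t, f t = g t := by
  intro t
  have h01 : (0 : ℝ) ∈ Ioo (-(|t| + 1)) (|t| + 1) := by
    constructor <;> nlinarith [abs_nonneg t]
  have ht : t ∈ Ioo (-(|t| + 1)) (|t| + 1) := by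
    constructor <;> nlinarith [abs_nonneg t, neg_abs_le t, le_abs_self t]
  exact ODE_solution_unique_of_mem_Ioo (v := fun _ z => v z) (s := fun _ => Set.univ)
    (fun _ _ => hv.lipschitzOnWith) h01
    (fun s _ => ⟨hf s, trivial⟩) (fun s _ => ⟨hg s, trivial⟩) h0 ht

/-- For q > max β, the solution of x' = q - β(x), x(0) = 0 is strictly increasing,
crosses 1 at a unique time `tc`, is space-time periodic, and has effective speed 1/tc. -/
theorem stmt_14 (β : ℝ → ℝ) (K : NNReal) (q M : ℝ) (x : ℝ → ℝ)
    (hβl : LipschitzWith K β) (hper : Function.Periodic β 1)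
    (hM : IsGreatest (Set.range β) M) (hq : M < q)
    (hx : ∀ t, HasDerivAt x (q - β (x t)) t) (hx0 : x 0 = 0) :
    StrictMono x ∧ (∀ t, q - M ≤ q - β (x t)) ∧ 0 < q - M ∧
      ∃ tc, 0 < tc ∧ x tc = 1 ∧ (∀ s, 0 < s → x s = 1 → s = tc) ∧
        (∀ t, x (t + tc) = x t + 1) ∧
        Filter.Tendsto (fun t => x t / t) Filter.atTop (nhds (1 / tc)) := by
  have hβle : ∀ z, β z ≤ M := fun z => hM.2 ⟨z, rfl⟩
  have hqM : 0 < q - M := sub_pos.2 hq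
  have hdpos : ∀ t, 0 < q - β (x t) := fun t => lt_of_lt_of_le hqM (by linarith [hβle (x t)])
  have hmono : StrictMono x := strictMono_of_hasDerivAt_pos hx hdpos
  have hbnd : ∀ t, q - M ≤ q - β (x t) := fun t => by linarith [hβle (x t)]
  -- lower linear growth
  have hgrow : ∀ t : ℝ, 0 ≤ t → (q - M) * t ≤ x t := by
    intro t ht
    have hmon : Monotone (fun s => x s - (q - M) * s) := by
      apply monotone_of_hasDerivAt_nonneg (f' := fun s => (q - β (x s)) - (q - M))
      · intro s
        have := (hx s).sub ((hasDerivAt_id' s).const_mul (q - M))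
        rw [mul_one] at this
        exact this
      · intro s
        simp only [Pi.zero_apply, sub_nonneg]
        exact hbnd s
    have := hmon ht
    simp only [hx0] at this
    linarith
  -- existence of tc
  have hT : (0:ℝ) < (q - M)⁻¹ := inv_pos.2 hqM
  have hxT : (1:ℝ) ≤ x ((q - M)⁻¹) := by
    have := hgrow ((q - M)⁻¹) hT.le
    rwa [mul_inv_cancel₀ hqM.ne'] at this
  have hcont : Continuous x := by
    have : Differentiable ℝ x := fun t => (hx t).differentiableAt
    exact this.continuous
  obtain ⟨tc, htc_mem, htc⟩ : ∃ tc ∈ Icc (0:ℝ) ((q - M)⁻¹), x tc = 1 := by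
    have := intermediate_value_Icc hT.le hcont.continuousOn
    exact this (by rw [hx0]; exact ⟨zero_le_one, hxT⟩)
  have htc_pos : 0 < tc := by
    rcases htc_mem.1.lt_or_eq with h | h
    · exact h
    · exfalso; rw [← h, hx0] at htc; norm_num at htc
  -- space-time periodicity
  have hK' : LipschitzWith (0 + K) (fun z => q - β z) := (LipschitzWith.const q).sub hβl
  have hshift : ∀ t, x (t + tc) = x t + 1 := by
    have key := ode_uniq_aux (fun z => q - β z) (0 + K) hK'
      (fun t => x (t + tc) - 1) x
      (fun t => by
        have h1 : HasDerivAt (fun t => x (t + tc)) (q - β (x (t + tc))) t := by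
          have := (hx (t + tc)).comp t ((hasDerivAt_id' t).add_const tc)
          rw [mul_one] at this
          exact this
        have h2 := h1.sub_const 1
        have hb : β (x (t + tc)) = β (x (t + tc) - 1) := by
          have := hper (x (t + tc) - 1)
          rwa [sub_add_cancel] at this
        simpa [hb] using h2)
      hx (by simp [hx0, htc])
    intro t
    have := key t
    linarith
  -- effective speed
  refine ⟨hmono, hbnd, hqM, tc, htc_pos, htc,
    fun s _ hs => hmono.injective (hs.trans htc.symm), hshift, ?_⟩
  have hGper : Function.Periodic (fun t => x t - t / tc) tc := by
    intro t
    have h := hshift t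
    have h2 : (t + tc) / tc = t / tc + 1 := by field_simp
    simp only [h, h2]
    ring
  have hGcont : Continuous fun t => x t - t / tc := hcont.sub (continuous_id.div_const tc)
  obtain ⟨C, hC⟩ : ∃ C, ∀ t, |x t - t / tc| ≤ C := by
    obtain ⟨C, hC⟩ := (isCompact_Icc (a := (0:ℝ)) (b := tc)).exists_bound_of_continuousOn
      (hGcont.abs.continuousOn)
    refine ⟨C, fun t => ?_⟩
    obtain ⟨s, hs, hst⟩ := hGper.exists_mem_Ico₀ htc_pos t
    rw [hst]
    exact (le_abs_self _).trans (hC s (Ico_subset_Icc_self hs))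
  have h0 : Tendsto (fun t : ℝ => (x t - t / tc) / t) atTop (nhds 0) := by
    refine squeeze_zero_norm' (a := fun t => C / t) ?_
      (tendsto_const_nhds.div_atTop tendsto_id)
    filter_upwards [eventually_gt_atTop (0:ℝ)] with t ht
    rw [Real.norm_eq_abs, abs_div, abs_of_pos ht]
    gcongr
    exact hC t
  have : Tendsto (fun t : ℝ => (x t - t / tc) / t + 1 / tc) atTop (nhds (0 + 1 / tc)) :=
    h0.add tendsto_const_nhds
  rw [zero_add] at this
  apply this.congr'
  filter_upwards [eventually_gt_atTop (0:ℝ)] with t ht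
  field_simp
  ring
end

section
/- Let β : ℝ → ℝ be Lipschitz with constant K and 1-periodic, and let max β < q₁ < q₂. Let r(qᵢ) = 1/t_c(qᵢ) be the effective speeds defined as in the previous statement. Then r(q₁) ≤ r(q₂), and moreover r(q₂) ≤ r(q₁) + C (q₂ - q₁) for a constant C depending only on K, q₁ - max β, and r(q₁). In particular q ↦ r(q) is locally Lipschitz on (max β, ∞). -/
open Real Set Filter Topology

private lemma beta_lb {K : NNReal} {β : ℝ → ℝ} {M : ℝ} (hK : LipschitzWith K β)
    (hper : Function.Periodic β 1) (hM : IsGreatest (Set.range β) M) (s : ℝ) :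
    M - K ≤ β s := by
  obtain ⟨a, ha⟩ := hM.1
  have hp : β (a + Int.fract (s - a) + (⌊s - a⌋ : ℤ) * 1) = β (a + Int.fract (s - a)) :=
    (hper.int_mul ⌊s - a⌋) (a + Int.fract (s - a))
  have hs : a + Int.fract (s - a) + (⌊s - a⌋ : ℤ) * 1 = s := by
    rw [Int.fract]; ring
  rw [hs] at hp
  have hd := hK.dist_le_mul (a + Int.fract (s - a)) a
  rw [← hp, ha] at hd
  have hKnn : (0 : ℝ) ≤ (K : ℝ) := K.2
  have h1 : dist (a + Int.fract (s - a)) a ≤ 1 := by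
    rw [Real.dist_eq]
    have h2 := Int.fract_nonneg (s - a)
    have h3 := Int.fract_lt_one (s - a)
    rw [abs_of_nonneg (by linarith)]
    linarith
  have h2 : dist (β s) M ≤ (K : ℝ) := le_trans hd (by nlinarith)
  rw [Real.dist_eq] at h2
  have := (abs_le.1 h2).1
  linarith

private lemma comparison {K : NNReal} {β : ℝ → ℝ} {q₁ q₂ : ℝ} {x y : ℝ → ℝ}
    (hK : LipschitzWith K β) (h12 : q₁ ≤ q₂)
    (hx : ∀ t, HasDerivAt x (q₁ - β (x t)) t)
    (hy : ∀ t, HasDerivAt y (q₂ - β (y t)) t)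
    (h0 : x 0 = y 0) : ∀ T, 0 ≤ T → x T ≤ y T := by
  intro T hT
  by_contra hcon
  push_neg at hcon
  have hxc : Continuous x :=
    Differentiable.continuous (fun t => (hx t).differentiableAt)
  have hyc : Continuous y :=
    Differentiable.continuous (fun t => (hy t).differentiableAt)
  set w : ℝ → ℝ := fun t => x t - y t with hwdef
  have hwc : Continuous w := hxc.sub hyc
  have hwT : 0 < w T := sub_pos.2 hcon
  set S : Set ℝ := Icc 0 T ∩ w ⁻¹' (Iic 0) with hSdef
  have hS0 : (0 : ℝ) ∈ S := ⟨⟨le_refl 0, hT⟩, by simp [hwdef, h0]⟩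
  have hScl : IsClosed S := (isClosed_Icc).inter (isClosed_Iic.preimage hwc)
  have hSbdd : BddAbove S := ⟨T, fun t ht => ht.1.2⟩
  set s := sSup S with hsdef
  have hsS : s ∈ S := hScl.csSup_mem ⟨0, hS0⟩ hSbdd
  have hs0 : 0 ≤ s := hsS.1.1
  have hsT : s ≤ T := hsS.1.2
  have hws : w s ≤ 0 := hsS.2
  have hsltT : s < T := by
    rcases lt_or_eq_of_le hsT with h | h
    · exact h
    · exfalso; rw [h] at hws; exact absurd hws (not_le.2 hwT)
  have hpos : ∀ t ∈ Ioc s T, 0 < w t := by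
    intro t ht
    rcases lt_or_ge 0 (w t) with h | h
    · exact h
    · exact absurd (le_csSup hSbdd ⟨⟨le_trans hs0 ht.1.le, ht.2⟩, h⟩) (not_le.2 ht.1)
  have hws0 : w s = 0 := by
    refine le_antisymm hws ?_
    have htend : Tendsto w (𝓝[>] s) (𝓝 (w s)) :=
      (hwc.continuousAt.tendsto).mono_left nhdsWithin_le_nhds
    have hev : ∀ᶠ t in 𝓝[>] s, 0 ≤ w t := by
      filter_upwards [Ioc_mem_nhdsGT_of_mem ⟨le_refl s, hsltT⟩] with t ht
      exact (hpos t ht).le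
    exact ge_of_tendsto htend hev
  have hwnn : ∀ t ∈ Icc s T, 0 ≤ w t := by
    intro t ht
    rcases eq_or_lt_of_le ht.1 with h | h
    · exact h ▸ hws0.ge
    · exact (hpos t ⟨h, ht.2⟩).le
  have hbound : ∀ t ∈ Ico s T, (q₁ - β (x t)) - (q₂ - β (y t)) ≤ (K : ℝ) * w t + 0 := by
    intro t ht
    have hwt : 0 ≤ w t := hwnn t ⟨ht.1, ht.2.le⟩
    have hb : β (y t) - β (x t) ≤ (K : ℝ) * w t := by
      have hd := hK.dist_le_mul (y t) (x t)
      rw [Real.dist_eq, Real.dist_eq] at hd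
      have h1 : β (y t) - β (x t) ≤ |β (y t) - β (x t)| := le_abs_self _
      have h2 : |y t - x t| = w t := by
        rw [abs_sub_comm]; exact abs_of_nonneg hwt
      rw [h2] at hd
      linarith
    have heq : (q₁ - β (x t)) - (q₂ - β (y t)) = (q₁ - q₂) + (β (y t) - β (x t)) := by ring
    rw [heq]
    linarith
  have key := le_gronwallBound_of_liminf_deriv_right_le
    (f := w) (f' := fun t => (q₁ - β (x t)) - (q₂ - β (y t))) (δ := 0) (K := K) (ε := 0)
    (hwc.continuousOn)
    (fun t _ r hr => (((hx t).sub (hy t)).hasDerivWithinAt).liminf_right_slope_le hr)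
    hws0.le hbound T ⟨hsltT.le, le_refl T⟩
  rw [gronwallBound_ε0_δ0] at key
  linarith

private lemma gronwallBound_le_aux (K : NNReal) (ε t : ℝ) (hε : 0 ≤ ε) (ht : 0 ≤ t) :
    gronwallBound 0 K ε t ≤ ε * t * exp (K * t) := by
  by_cases hK : (K : ℝ) = 0
  · rw [hK, gronwallBound_K0]
    simp
  · have hKpos : 0 < (K : ℝ) := lt_of_le_of_ne K.2 (Ne.symm hK)
    rw [gronwallBound_of_K_ne_0 hK]
    simp only [zero_mul, zero_add]
    have h1 : exp ((K : ℝ) * t) - 1 ≤ ((K : ℝ) * t) * exp ((K : ℝ) * t) := by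
      have h2 := Real.add_one_le_exp (-((K : ℝ) * t))
      have hep : 0 < exp ((K : ℝ) * t) := Real.exp_pos _
      have h3 : (-((K : ℝ) * t) + 1) * exp ((K : ℝ) * t)
          ≤ exp (-((K : ℝ) * t)) * exp ((K : ℝ) * t) := by nlinarith
      rw [← Real.exp_add] at h3
      simp at h3
      nlinarith
    rw [div_mul_eq_mul_div, div_le_iff₀ hKpos]
    calc ε * (exp ((K : ℝ) * t) - 1) ≤ ε * (((K : ℝ) * t) * exp ((K : ℝ) * t)) := by nlinarith
    _ = ε * t * exp ((K : ℝ) * t) * K := by ring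

set_option maxHeartbeats 2000000 in
/-- Monotonicity and local Lipschitz regularity of the effective speed r(q) = 1/t_c
for q > max β, with a constant depending only on the Lipschitz constant K of β,
on δ = q₁ - max β and on r₁ = r(q₁). -/
theorem stmt_15 (K : NNReal) (δ r₁ : ℝ) (hδ : 0 < δ) (hr₁ : 0 < r₁) :
    ∃ C > 0, ∀ (β : ℝ → ℝ) (q₁ q₂ M : ℝ) (x y : ℝ → ℝ) (t₁ t₂ : ℝ),
      LipschitzWith K β → Function.Periodic β 1 → IsGreatest (Set.range β) M →
      M < q₁ → q₁ < q₂ → q₁ - M = δ →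
      (∀ t, HasDerivAt x (q₁ - β (x t)) t) → x 0 = 0 →
      (∀ t, HasDerivAt y (q₂ - β (y t)) t) → y 0 = 0 →
      0 < t₁ → x t₁ = 1 → 0 < t₂ → y t₂ = 1 → 1 / t₁ = r₁ →
      1 / t₁ ≤ 1 / t₂ ∧ 1 / t₂ ≤ 1 / t₁ + C * (q₂ - q₁) := by
  have hKnn : (0 : ℝ) ≤ (K : ℝ) := K.2
  set E := exp ((K : ℝ) / r₁) with hE
  have hE1 : 1 ≤ E := Real.one_le_exp (div_nonneg hKnn hr₁.le)
  clear_value E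
  refine ⟨(1 + δ + K) * (E / δ + 1), by positivity, ?_⟩
  intro β q₁ q₂ M x y t₁ t₂ hK hper hM hMq₁ hq₁₂ hδeq hx hx0 hy hy0 ht₁ hxt₁ ht₂ hyt₂ hrt₁
  set C := (1 + δ + (K : ℝ)) * (E / δ + 1) with hC
  clear_value C
  have ht₁r : t₁ = 1 / r₁ := by rw [← hrt₁, one_div_one_div]
  have hxub : ∀ s, β s ≤ M := fun s => hM.2 ⟨s, rfl⟩
  have hxmono : StrictMono x := by
    apply strictMono_of_deriv_pos
    intro t
    rw [(hx t).deriv]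
    have := hxub (x t)
    linarith
  have hcomp := comparison hK hq₁₂.le hx hy (by rw [hx0, hy0])
  have ht₂₁ : t₂ ≤ t₁ := by
    by_contra hc
    push_neg at hc
    have h1 : x t₂ ≤ y t₂ := hcomp t₂ ht₂.le
    have h2 : x t₁ < x t₂ := hxmono hc
    rw [hxt₁] at h2
    rw [hyt₂] at h1
    linarith
  refine ⟨one_div_le_one_div_of_le ht₂ ht₂₁, ?_⟩
  have hD : 0 < q₂ - q₁ := by linarith
  set D := q₂ - q₁ with hDdef
  clear_value D
  -- Gronwall bound on y - x at t₂
  have hgr : y t₂ - x t₂ ≤ D * t₁ * E := by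
    have hbound : ∀ t ∈ Ico (0:ℝ) t₂,
        ‖(q₂ - β (y t)) - (q₁ - β (x t))‖ ≤ (K : ℝ) * ‖y t - x t‖ + D := by
      intro t _
      have hb := hK.dist_le_mul (y t) (x t)
      rw [Real.dist_eq, Real.dist_eq] at hb
      have heq : (q₂ - β (y t)) - (q₁ - β (x t)) = D - (β (y t) - β (x t)) := by
        rw [hDdef]; ring
      rw [Real.norm_eq_abs, Real.norm_eq_abs, heq]
      calc |D - (β (y t) - β (x t))| ≤ |β (y t) - β (x t)| + |D| := by
            rw [abs_sub_comm]; exact abs_sub _ _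
      _ ≤ (K : ℝ) * |y t - x t| + D := by
            rw [abs_of_pos hD]; exact add_le_add hb (le_refl _)
    have hb := norm_le_gronwallBound_of_norm_deriv_right_le (f := fun t => y t - x t)
      (f' := fun t => (q₂ - β (y t)) - (q₁ - β (x t))) (δ := 0) (K := K) (ε := D) (a := 0) (b := t₂)
      (Continuous.continuousOn ((Differentiable.continuous
          (fun t => (hy t).differentiableAt)).sub
        (Differentiable.continuous (fun t => (hx t).differentiableAt))))
      (fun t _ => (((hy t).sub (hx t)).hasDerivWithinAt))
      (by simp [hx0, hy0]) hbound t₂ ⟨ht₂.le, le_refl _⟩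
    have h2 : ‖y t₂ - x t₂‖ ≤ gronwallBound 0 K D t₂ := by simpa using hb
    have h3 := gronwallBound_le_aux K D t₂ hD.le ht₂.le
    have h4 : y t₂ - x t₂ ≤ ‖y t₂ - x t₂‖ := le_abs_self _
    have h5 : D * t₂ * exp ((K:ℝ) * t₂) ≤ D * t₁ * exp ((K:ℝ) * t₁) := by
      have he : exp ((K:ℝ) * t₂) ≤ exp ((K:ℝ) * t₁) := Real.exp_le_exp.2 (by nlinarith)
      have hdt : D * t₂ ≤ D * t₁ := by nlinarith
      exact mul_le_mul hdt he (Real.exp_pos _).le (by positivity)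
    have hexp : exp ((K : ℝ) * t₁) = E := by rw [hE, ht₁r, mul_one_div]
    rw [hexp] at h5
    linarith
  -- linear lower bound on x
  have hlin : δ * (t₁ - t₂) ≤ x t₁ - x t₂ := by
    have hmono : Monotone (fun t => x t - δ * t) := by
      apply monotone_of_deriv_nonneg
      · exact fun t => ((hx t).sub ((hasDerivAt_id t).const_mul δ)).differentiableAt
      · intro t
        have hd : HasDerivAt (fun t => x t - δ * t) ((q₁ - β (x t)) - δ * 1) t :=
          (hx t).sub ((hasDerivAt_id t).const_mul δ)
        rw [hd.deriv]
        have := hxub (x t)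
        linarith
    have := hmono ht₂₁
    simp only at this
    linarith
  -- lower bound on t₂
  have ht₂lb : 1 ≤ (D + δ + (K : ℝ)) * t₂ := by
    have hmono : Monotone (fun t => (q₂ - M + (K : ℝ)) * t - y t) := by
      apply monotone_of_deriv_nonneg
      · exact fun t => (((hasDerivAt_id t).const_mul _).sub (hy t)).differentiableAt
      · intro t
        have hd : HasDerivAt (fun t => (q₂ - M + (K : ℝ)) * t - y t)
            ((q₂ - M + (K : ℝ)) * 1 - (q₂ - β (y t))) t :=
          ((hasDerivAt_id t).const_mul _).sub (hy t)
        rw [hd.deriv]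
        have := beta_lb hK hper hM (y t)
        linarith
    have hm := hmono ht₂.le
    simp only [mul_zero, hy0, sub_zero, hyt₂] at hm
    have heq : q₂ - M + (K : ℝ) = D + δ + K := by rw [hDdef, ← hδeq]; ring
    rw [heq] at hm
    linarith
  have hkey : δ * (t₁ - t₂) ≤ D * t₁ * E := by
    have h1 : x t₁ - x t₂ = y t₂ - x t₂ := by rw [hxt₁, hyt₂]
    linarith
  have ht₁0 : (0:ℝ) < t₁ := ht₁
  rcases le_or_gt D 1 with hD1 | hD1
  · have ht₂lb' : 1 ≤ (1 + δ + (K : ℝ)) * t₂ := by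
      have := mul_le_mul_of_nonneg_right
        (show D + δ + (K:ℝ) ≤ 1 + δ + K by linarith) ht₂.le
      linarith
    have hCδ : (1 + δ + (K : ℝ)) * E ≤ C * δ := by
      have hh : C * δ = (1 + δ + (K : ℝ)) * E + (1 + δ + (K : ℝ)) * δ := by
        rw [hC]; field_simp
      have hp : (0:ℝ) < (1 + δ + (K : ℝ)) * δ :=
        mul_pos (by linarith) hδ
      linarith
    have hE0 : (0:ℝ) ≤ E := by linarith
    have h6 : E ≤ C * δ * t₂ := by
      have a1 := mul_le_mul_of_nonneg_left ht₂lb' hE0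
      have a2 := mul_le_mul_of_nonneg_right hCδ ht₂.le
      nlinarith
    have h9 : δ * (t₁ - t₂) ≤ δ * (C * D * (t₁ * t₂)) := by
      have h8 : D * t₁ * E ≤ D * t₁ * (C * δ * t₂) :=
        mul_le_mul_of_nonneg_left h6 (by positivity)
      nlinarith
    have h7 : t₁ - t₂ ≤ C * D * (t₁ * t₂) := le_of_mul_le_mul_left h9 hδ
    have heq2 : 1 / t₂ - 1 / t₁ = (t₁ - t₂) / (t₁ * t₂) := by
      field_simp
    have h10 : (t₁ - t₂) / (t₁ * t₂) ≤ C * D := by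
      rw [div_le_iff₀ (mul_pos ht₁0 ht₂)]
      linarith
    linarith [heq2, h10]
  · have h1 : 1 / t₂ ≤ D + δ + (K : ℝ) := by
      rw [div_le_iff₀ ht₂]
      linarith
    have h2 : D + δ + (K : ℝ) ≤ D * (1 + δ + K) := by
      have hh : (0:ℝ) ≤ (D - 1) * (δ + (K:ℝ)) :=
        mul_nonneg (by linarith) (by linarith)
      linarith
    have h3 : (1 + δ + (K : ℝ)) ≤ C := by
      have hdiv : 0 < E / δ := div_pos (by linarith) hδ
      have := mul_pos (show (0:ℝ) < 1 + δ + (K:ℝ) by linarith) hdiv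
      rw [hC]
      linarith
    have h4 : 0 < 1 / t₁ := by positivity
    have h5 : D * (1 + δ + (K:ℝ)) ≤ D * C := mul_le_mul_of_nonneg_left h3 hD.le
    linarith [mul_comm D C]
end

section
/- Let β : ℝ → ℝ be C², 1-periodic, attaining its maximum q₀ = β(0) at 0, with β(x) ≥ q₀ - C₀ x² for all x. For q > q₀ set η = q - q₀ and let x(t) solve x' = q - β(x), x(0) = 0. Then the time t_c with x(t_c) = 1 satisfies 1/t_c ≤ C (η + √η) for a constant C depending only on C₀; hence r(q) ≤ C (q - q₀)^{1/2} for q near q₀, and r is continuous at q₀ with r(q₀) = 0. -/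
open Real Set Filter

/-- Near the depinning threshold of a C² medium, the effective speed r(q) = 1/t_c
vanishes at least like a square root: 1/t_c ≤ C(η + √η) with η = q - q₀. -/
theorem stmt_16 (C₀ : ℝ) (hC₀ : 0 < C₀) :
    ∃ C > 0, ∀ (β : ℝ → ℝ) (q₀ q : ℝ) (x : ℝ → ℝ) (tc : ℝ),
      ContDiff ℝ 2 β → Function.Periodic β 1 →
      β 0 = q₀ → IsGreatest (Set.range β) q₀ →
      (∀ s, q₀ - C₀ * s ^ 2 ≤ β s) →
      q₀ < q →
      (∀ t, HasDerivAt x (q - β (x t)) t) → x 0 = 0 →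
      0 < tc → x tc = 1 →
      1 / tc ≤ C * ((q - q₀) + Real.sqrt (q - q₀)) := by
  refine ⟨1 + C₀, by linarith, ?_⟩
  intro β q₀ q x tc hβC2 hper hβ0 hmax hlow hq hx hx0 htc hxtc
  set η := q - q₀ with hη
  have hηpos : 0 < η := by simp [hη]; linarith
  have hβle : ∀ s, β s ≤ q₀ := fun s => hmax.2 (mem_range_self s)
  -- x is strictly monotone
  have hdiff : Differentiable ℝ x := fun t => (hx t).differentiableAt
  have hmono : StrictMono x := by
    apply strictMono_of_deriv_pos
    intro t
    rw [(hx t).deriv]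
    have := hβle (x t); linarith
  set δ : ℝ := min 1 (Real.sqrt η) with hδ
  have hsq : 0 < Real.sqrt η := Real.sqrt_pos.mpr hηpos
  have hδpos : 0 < δ := lt_min one_pos hsq
  have hδ1 : δ ≤ 1 := min_le_left _ _
  have hδsq : δ ^ 2 ≤ η := by
    rcases le_total 1 (Real.sqrt η) with h | h
    · have : δ = 1 := min_eq_left h
      rw [this]
      nlinarith [Real.sq_sqrt hηpos.le]
    · have : δ = Real.sqrt η := min_eq_right h
      rw [this, Real.sq_sqrt hηpos.le]
  -- find t₁ with x t₁ = δ
  have hcont : Continuous x := hdiff.continuous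
  have hiv : Set.Icc (x 0) (x tc) ⊆ x '' Set.Icc 0 tc :=
    intermediate_value_Icc htc.le hcont.continuousOn
  obtain ⟨t₁, ht₁mem, hxt₁⟩ : ∃ t₁ ∈ Set.Icc 0 tc, x t₁ = δ := by
    have : δ ∈ Set.Icc (x 0) (x tc) := by
      rw [hx0, hxtc]; exact ⟨hδpos.le, hδ1⟩
    exact hiv this
  set K : ℝ := (1 + C₀) * η with hK
  have hKpos : 0 < K := by positivity
  -- on [0, t₁], derivative ≤ K
  have hbound : ∀ t ∈ Set.Icc (0:ℝ) t₁, ‖q - β (x t)‖ ≤ K := by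
    intro t ht
    have hx0le : (0:ℝ) ≤ x t := by rw [← hx0]; exact hmono.monotone ht.1
    have hxle : x t ≤ δ := by rw [← hxt₁]; exact hmono.monotone ht.2
    have h1 : x t ^ 2 ≤ η := by nlinarith
    have h2 : q - β (x t) ≤ K := by
      have := hlow (x t)
      rw [hK]; nlinarith
    have h3 : 0 ≤ q - β (x t) := by have := hβle (x t); linarith
    rw [Real.norm_eq_abs, abs_of_nonneg h3]; exact h2
  have hmvt : ‖x t₁ - x 0‖ ≤ K * (t₁ - 0) := by
    have := norm_image_sub_le_of_norm_deriv_le_segment'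
      (f := x) (f' := fun t => q - β (x t)) (a := 0) (b := t₁) (C := K)
      (fun t _ => (hx t).hasDerivWithinAt)
      (fun t ht => hbound t (Set.mem_Icc_of_Ico ht))
    exact this t₁ (Set.right_mem_Icc.mpr ht₁mem.1)
  have hδle : δ ≤ K * tc := by
    have h1 : δ ≤ K * t₁ := by
      rw [hxt₁, hx0, sub_zero, sub_zero] at hmvt
      calc δ = ‖δ‖ := (Real.norm_of_nonneg hδpos.le).symm
        _ ≤ K * t₁ := hmvt
    have h2 : K * t₁ ≤ K * tc := by
      apply mul_le_mul_of_nonneg_left ht₁mem.2 hKpos.le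
    linarith
  -- conclude
  have hfin : 1 / tc ≤ K / δ := by
    rw [div_le_div_iff₀ htc hδpos]
    linarith
  refine hfin.trans ?_
  rcases le_total (Real.sqrt η) 1 with h | h
  · have hδeq : δ = Real.sqrt η := min_eq_right h
    have hηeq : η = Real.sqrt η * Real.sqrt η := (Real.mul_self_sqrt hηpos.le).symm
    rw [hδeq, hK, div_le_iff₀ hsq]
    nlinarith [hsq, hηpos, hC₀]
  · have hδeq : δ = 1 := min_eq_left h
    rw [hδeq, div_one, hK]
    nlinarith [hsq, hC₀]
end

section
/- Let 𝓕 : ℝ × (0, ℓ_c] → ℝ be continuous, Lipschitz in the second variable, and 1-periodic in the first variable. Let y : [0, ∞) → (0, ℓ_c] be a bounded solution of the ODE-with-constraint max{y'(x) - 𝓕(x, y(x)), y(x) - ℓ_c} = 0 such that solutions satisfy the comparison principle (y₁(0) ≤ y₂(0) implies y₁ ≤ y₂). Then the sequence of translates y_n(x) := y(x + n), n ∈ ℕ, is monotone in n and converges pointwise to a 1-periodic function z(x). -/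
open Real Set Filter

/-- Lemma 6.2: the translates of a bounded solution of the constrained ODE in a
periodic medium are monotone in n and converge to a 1-periodic profile. -/
theorem stmt_17 (ℓc : ℝ) (L : NNReal) (F : ℝ → ℝ → ℝ) (y dy : ℝ → ℝ)
    (hℓc : 0 < ℓc)
    (hFc : Continuous (Function.uncurry F))
    (hFlip : ∀ s, LipschitzWith L (F s))
    (hFper : ∀ s ℓ, F (s + 1) ℓ = F s ℓ)
    (hybd : ∀ s ≥ 0, y s ∈ Set.Ioc 0 ℓc)
    (hy : ∀ s ≥ 0, HasDerivAt y (dy s) s ∧ max (dy s - F s (y s)) (y s - ℓc) = 0)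
    (hcomp : ∀ (y₁ y₂ dy₁ dy₂ : ℝ → ℝ),
      (∀ s ≥ 0, y₁ s ∈ Set.Ioc 0 ℓc) → (∀ s ≥ 0, y₂ s ∈ Set.Ioc 0 ℓc) →
      (∀ s ≥ 0, HasDerivAt y₁ (dy₁ s) s ∧ max (dy₁ s - F s (y₁ s)) (y₁ s - ℓc) = 0) →
      (∀ s ≥ 0, HasDerivAt y₂ (dy₂ s) s ∧ max (dy₂ s - F s (y₂ s)) (y₂ s - ℓc) = 0) →
      y₁ 0 ≤ y₂ 0 → ∀ s ≥ 0, y₁ s ≤ y₂ s) :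
    ((∀ s ≥ 0, Monotone fun n : ℕ => y (s + n)) ∨
        (∀ s ≥ 0, Antitone fun n : ℕ => y (s + n))) ∧
      ∃ z : ℝ → ℝ, Function.Periodic z 1 ∧
        ∀ s ≥ 0, Filter.Tendsto (fun n : ℕ => y (s + n)) Filter.atTop (nhds (z s)) := by
  -- the shifted function is again a solution
  have hbd1 : ∀ s ≥ 0, (fun t => y (t + 1)) s ∈ Set.Ioc 0 ℓc := by
    intro s hs; exact hybd (s + 1) (by linarith)
  have hsol1 : ∀ s ≥ 0, HasDerivAt (fun t => y (t + 1)) ((fun t => dy (t + 1)) s) s ∧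
      max ((fun t => dy (t + 1)) s - F s ((fun t => y (t + 1)) s))
        ((fun t => y (t + 1)) s - ℓc) = 0 := by
    intro s hs
    have h1 : (s + 1 : ℝ) ≥ 0 := by linarith
    constructor
    · have hc := HasDerivAt.comp s (hy (s + 1) h1).1 ((hasDerivAt_id s).add_const 1)
      simpa [Function.comp_def] using hc
    · have := (hy (s + 1) h1).2
      simpa [hFper s] using this
  -- key step inequality
  rcases le_total (y 0) (y 1) with h01 | h01
  · -- monotone case
    have key : ∀ s ≥ 0, y s ≤ y (s + 1) := by
      have := hcomp y (fun t => y (t + 1)) dy (fun t => dy (t + 1))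
        hybd hbd1 hy hsol1 (by simpa using h01)
      simpa using this
    have hmono : ∀ s ≥ 0, Monotone fun n : ℕ => y (s + n) := by
      intro s hs
      apply monotone_nat_of_le_succ
      intro n
      have := key (s + n) (by positivity)
      simpa [add_assoc] using this
    have hbddA : ∀ s ≥ 0, BddAbove (Set.range fun n : ℕ => y (s + n)) := by
      intro s hs
      refine ⟨ℓc, ?_⟩
      rintro _ ⟨n, rfl⟩
      exact (hybd (s + n) (by positivity)).2
    refine ⟨Or.inl hmono, ?_⟩
    set w : ℝ → ℝ := fun s => ⨆ n : ℕ, y (s + n) with hw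
    have htend : ∀ s ≥ 0, Tendsto (fun n : ℕ => y (s + n)) atTop (nhds (w s)) := by
      intro s hs
      exact tendsto_atTop_ciSup (hmono s hs) (hbddA s hs)
    have hw1 : ∀ s ≥ 0, w (s + 1) = w s := by
      intro s hs
      have h1 : Tendsto (fun n : ℕ => y (s + 1 + n)) atTop (nhds (w (s + 1))) :=
        htend (s + 1) (by linarith)
      have h2 : Tendsto (fun n : ℕ => y (s + 1 + n)) atTop (nhds (w s)) := by
        have h3 := (htend s hs).comp (tendsto_add_atTop_nat 1)
        have heq : ((fun n : ℕ => y (s + n)) ∘ fun a : ℕ => a + 1) = fun n : ℕ => y (s + 1 + n) := by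
          funext n; simp only [Function.comp_apply]; congr 1; push_cast; ring
        rwa [heq] at h3
      exact tendsto_nhds_unique h1 h2
    have hwN : ∀ m : ℕ, ∀ s ≥ 0, w (s + m) = w s := by
      intro m
      induction m with
      | zero => simp
      | succ k ih =>
          intro s hs
          have : (s + (k + 1 : ℕ) : ℝ) = (s + k) + 1 := by push_cast; ring
          rw [this, hw1 (s + k) (by positivity), ih s hs]
    refine ⟨fun s => w (Int.fract s), ?_, ?_⟩
    · intro s
      simp [Int.fract_add_one]
    · intro s hs
      have hfr : Int.fract s + (⌊s⌋.toNat : ℕ) = s := by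
        have h0 : (0 : ℤ) ≤ ⌊s⌋ := Int.floor_nonneg.mpr hs
        have : ((⌊s⌋.toNat : ℕ) : ℝ) = (⌊s⌋ : ℝ) := by
          rw [← Int.cast_natCast]; norm_cast; exact Int.toNat_of_nonneg h0
        rw [this, Int.fract]; ring
      have := hwN ⌊s⌋.toNat (Int.fract s) (Int.fract_nonneg s)
      rw [hfr] at this
      show Tendsto (fun n : ℕ => y (s + n)) atTop (nhds (w (Int.fract s)))
      rw [← this]
      exact htend s hs
  · -- antitone case
    have key : ∀ s ≥ 0, y (s + 1) ≤ y s := by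
      have := hcomp (fun t => y (t + 1)) y (fun t => dy (t + 1)) dy
        hbd1 hybd hsol1 hy (by simpa using h01)
      simpa using this
    have hanti : ∀ s ≥ 0, Antitone fun n : ℕ => y (s + n) := by
      intro s hs
      apply antitone_nat_of_succ_le
      intro n
      have := key (s + n) (by positivity)
      simpa [add_assoc] using this
    have hbddB : ∀ s ≥ 0, BddBelow (Set.range fun n : ℕ => y (s + n)) := by
      intro s hs
      refine ⟨0, ?_⟩
      rintro _ ⟨n, rfl⟩
      exact (hybd (s + n) (by positivity)).1.le
    refine ⟨Or.inr hanti, ?_⟩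
    set w : ℝ → ℝ := fun s => ⨅ n : ℕ, y (s + n) with hw
    have htend : ∀ s ≥ 0, Tendsto (fun n : ℕ => y (s + n)) atTop (nhds (w s)) := by
      intro s hs
      exact tendsto_atTop_ciInf (hanti s hs) (hbddB s hs)
    have hw1 : ∀ s ≥ 0, w (s + 1) = w s := by
      intro s hs
      have h1 : Tendsto (fun n : ℕ => y (s + 1 + n)) atTop (nhds (w (s + 1))) :=
        htend (s + 1) (by linarith)
      have h2 : Tendsto (fun n : ℕ => y (s + 1 + n)) atTop (nhds (w s)) := by
        have h3 := (htend s hs).comp (tendsto_add_atTop_nat 1)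
        have heq : ((fun n : ℕ => y (s + n)) ∘ fun a : ℕ => a + 1) = fun n : ℕ => y (s + 1 + n) := by
          funext n; simp only [Function.comp_apply]; congr 1; push_cast; ring
        rwa [heq] at h3
      exact tendsto_nhds_unique h1 h2
    have hwN : ∀ m : ℕ, ∀ s ≥ 0, w (s + m) = w s := by
      intro m
      induction m with
      | zero => simp
      | succ k ih =>
          intro s hs
          have : (s + (k + 1 : ℕ) : ℝ) = (s + k) + 1 := by push_cast; ring
          rw [this, hw1 (s + k) (by positivity), ih s hs]
    refine ⟨fun s => w (Int.fract s), ?_, ?_⟩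
    · intro s
      simp [Int.fract_add_one]
    · intro s hs
      have hfr : Int.fract s + (⌊s⌋.toNat : ℕ) = s := by
        have h0 : (0 : ℤ) ≤ ⌊s⌋ := Int.floor_nonneg.mpr hs
        have : ((⌊s⌋.toNat : ℕ) : ℝ) = (⌊s⌋ : ℝ) := by
          rw [← Int.cast_natCast]; norm_cast; exact Int.toNat_of_nonneg h0
        rw [this, Int.fract]; ring
      have := hwN ⌊s⌋.toNat (Int.fract s) (Int.fract_nonneg s)
      rw [hfr] at this
      show Tendsto (fun n : ℕ => y (s + n)) atTop (nhds (w (Int.fract s)))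
      rw [← this]
      exact htend s hs
end

section
/- Let 𝓗 : ℝ → ℝ be Lipschitz and 1-periodic with 𝓗 ≥ η > 0, and let φ : ℝ → ℝ be continuous with φ(s) → 0 as s → ∞. Let b : [0, ∞) → ℝ solve b'(t) = 𝓗(b(t)) + φ(b(t)), with b' ≥ η/2 eventually, and define b_n(t) := b(t_n + t) - n where b(t_n) = n. Then (b_n) converges uniformly on compact time intervals to a function b_∞ solving b_∞' = 𝓗(b_∞), b_∞(0) = 0, and b_∞ satisfies b_∞(t + t₀) = b_∞(t) + 1 where t₀ is defined by b_∞(t₀) = 1. -/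
open Real Set Filter

lemma gronwall_scale (K ε x : ℝ) : gronwallBound 0 K ε x = ε * gronwallBound 0 K 1 x := by
  unfold gronwallBound; split_ifs <;> ring

lemma gronwall_mono {K ε x y : ℝ} (hK : 0 ≤ K) (hε : 0 ≤ ε) (hx : 0 ≤ x) (hxy : x ≤ y) :
    gronwallBound 0 K ε x ≤ gronwallBound 0 K ε y := by
  unfold gronwallBound; split_ifs with h
  · nlinarith
  · have hK' : 0 < K := lt_of_le_of_ne hK (Ne.symm h)
    have h1 : Real.exp (K * x) ≤ Real.exp (K * y) :=
      Real.exp_le_exp.2 (mul_le_mul_of_nonneg_left hxy hK)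
    have hε' : 0 ≤ ε / K := div_nonneg hε hK'.le
    nlinarith

lemma gronwall_pos {K s : ℝ} (hK : 0 ≤ K) (hs : 0 < s) : 0 < gronwallBound 0 K 1 s := by
  unfold gronwallBound; split_ifs with h
  · simpa using hs
  · have hK' : 0 < K := lt_of_le_of_ne hK (Ne.symm h)
    have h1 : Real.exp (K * 0) < Real.exp (K * s) :=
      Real.exp_lt_exp.2 (by nlinarith)
    simp only [mul_zero, Real.exp_zero] at h1
    have : 0 < (1 : ℝ) / K := by positivity
    nlinarith

/-- Convergence to the pulsating traveling wave: the translates b(t_n + ·) - n converge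
uniformly on compact time intervals to a solution of b' = Hfun(b) which is space-time
periodic. -/
theorem stmt_18 (C : NNReal) (η : ℝ) (Hfun φ b : ℝ → ℝ) (tseq : ℕ → ℝ)
    (hη : 0 < η) (hH : LipschitzWith C Hfun) (hHper : Function.Periodic Hfun 1)
    (hHpos : ∀ s, η ≤ Hfun s)
    (hφc : Continuous φ) (hφ0 : Filter.Tendsto φ Filter.atTop (nhds 0))
    (hb : ∀ t ≥ 0, HasDerivAt b (Hfun (b t) + φ (b t)) t)
    (hb' : ∃ T ≥ 0, ∀ t ≥ T, η / 2 ≤ Hfun (b t) + φ (b t))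
    (htseq : ∀ n : ℕ, 0 ≤ tseq n ∧ b (tseq n) = n) :
    ∃ binf : ℝ → ℝ, binf 0 = 0 ∧ (∀ t ≥ 0, HasDerivAt binf (Hfun (binf t)) t) ∧
      (∀ s > 0, TendstoUniformlyOn (fun (n : ℕ) (τ : ℝ) => b (tseq n + τ) - n) binf
        Filter.atTop (Set.Icc 0 s)) ∧
      ∃ t₀ > 0, binf t₀ = 1 ∧ ∀ τ ≥ 0, binf (τ + t₀) = binf τ + 1 := by
  classical
  obtain ⟨T, hT0, hbT⟩ := hb'
  have hHc : Continuous Hfun := hH.continuous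
  have hHpos' : ∀ x, 0 < Hfun x := fun x => lt_of_lt_of_le hη (hHpos x)
  have hinvc : Continuous fun u => (Hfun u)⁻¹ := hHc.inv₀ fun x => (hHpos' x).ne'
  obtain ⟨M, hM⟩ : ∃ M, ∀ x, Hfun x ≤ M := by
    obtain ⟨M, hM⟩ := isBounded_iff_forall_norm_le.1
      (hHper.isBounded_of_continuous one_ne_zero hHc)
    exact ⟨M, fun x => (le_abs_self _).trans (hM _ (mem_range_self x))⟩
  have hM0 : 0 < M := lt_of_lt_of_le (hHpos' 0) (hM 0)
  -- the time change G
  set G : ℝ → ℝ := fun x => ∫ u in (0:ℝ)..x, (Hfun u)⁻¹ with hGdef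
  have hGd : ∀ x, HasDerivAt G (Hfun x)⁻¹ x := fun x =>
    (hinvc.integral_hasStrictDerivAt 0 x).hasDerivAt
  have hGc : Continuous G := by
    have : Differentiable ℝ G := fun x => (hGd x).differentiableAt
    exact this.continuous
  have hGmono : StrictMono G := strictMono_of_deriv_pos (fun x => by
    rw [(hGd x).deriv]; exact inv_pos.2 (hHpos' x))
  have hGlow : ∀ x : ℝ, 0 ≤ x → x * M⁻¹ ≤ G x := by
    intro x hx
    have h1 : ∫ u in (0:ℝ)..x, M⁻¹ ≤ G x := by
      apply intervalIntegral.integral_mono_on hx (intervalIntegrable_const)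
        (hinvc.intervalIntegrable 0 x)
      intro u _
      exact inv_anti₀ (hHpos' u) (hM u)
    simpa using h1
  have hGhigh : ∀ x : ℝ, x ≤ 0 → G x ≤ x * M⁻¹ := by
    intro x hx
    have h1 : ∫ u in x..(0:ℝ), M⁻¹ ≤ ∫ u in x..(0:ℝ), (Hfun u)⁻¹ := by
      apply intervalIntegral.integral_mono_on hx (intervalIntegrable_const)
        (hinvc.intervalIntegrable _ _)
      intro u _
      exact inv_anti₀ (hHpos' u) (hM u)
    have h2 : G x = -∫ u in x..(0:ℝ), (Hfun u)⁻¹ := by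
      rw [hGdef]; exact (intervalIntegral.integral_symm x 0)
    have h3 : (0 - x) * M⁻¹ ≤ ∫ u in x..(0:ℝ), (Hfun u)⁻¹ := by simpa using h1
    rw [h2]; nlinarith
  have htop : Tendsto G atTop atTop := by
    apply tendsto_atTop_mono' _ _ (Tendsto.atTop_mul_const (inv_pos.2 hM0) tendsto_id)
    filter_upwards [eventually_ge_atTop (0:ℝ)] with x hx using hGlow x hx
  have hbot : Tendsto G atBot atBot := by
    apply tendsto_atBot_mono' _ _ (Tendsto.atBot_mul_const (inv_pos.2 hM0) tendsto_id)
    filter_upwards [eventually_le_atBot (0:ℝ)] with x hx using hGhigh x hx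
  have hGsurj : Function.Surjective G := hGc.surjective htop hbot
  set e : ℝ ≃o ℝ := StrictMono.orderIsoOfSurjective G hGmono hGsurj with hedef
  set binf : ℝ → ℝ := fun t => e.symm t with hbinfdef
  have hGB : ∀ y, G (binf y) = y := fun y => e.apply_symm_apply y
  have hBG : ∀ x, binf (G x) = x := fun x => e.symm_apply_apply x
  have hbinfc : Continuous binf := e.symm.continuous
  have hbinfd : ∀ t, HasDerivAt binf (Hfun (binf t)) t := by
    intro t
    have h := HasDerivAt.of_local_left_inverse (hbinfc.continuousAt)
      (hGd (binf t)) (inv_ne_zero (hHpos' _).ne') (Filter.Eventually.of_forall hGB)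
    simpa [inv_inv] using h
  have hG0 : G 0 = 0 := by simp [hGdef]
  have hbinf0 : binf 0 = 0 := by have h := hBG 0; rwa [hG0] at h
  -- periodicity
  have hinvper : Function.Periodic (fun u => (Hfun u)⁻¹) 1 := fun x => by
    simp [hHper x]
  have hGadd : ∀ x : ℝ, G (x + 1) = G x + G 1 := by
    intro x
    have h1 := hinvper.intervalIntegral_add_eq x 0
    have h2 : G (x + 1) = G x + ∫ u in x..(x + 1), (Hfun u)⁻¹ := by
      rw [hGdef]
      exact (intervalIntegral.integral_add_adjacent_intervals
        (hinvc.intervalIntegrable _ _) (hinvc.intervalIntegrable _ _)).symm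
    rw [h2, h1]; norm_num; rfl
  have ht₀pos : 0 < G 1 := by
    have := hGmono (show (0:ℝ) < 1 by norm_num)
    rwa [hG0] at this
  have hbinft₀ : binf (G 1) = 1 := hBG 1
  have hper : ∀ τ : ℝ, binf (τ + G 1) = binf τ + 1 := by
    intro τ
    apply hGmono.injective
    rw [hGB, hGadd, hGB]
  -- continuity and monotonicity of b
  have hbc : ContinuousOn b (Ici 0) := fun t ht =>
    ((hb t ht).differentiableAt).continuousAt.continuousWithinAt
  have hmono : MonotoneOn b (Ici T) := by
    apply (strictMonoOn_of_deriv_pos (convex_Ici T)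
      (hbc.mono (Ici_subset_Ici.2 hT0)) ?_).monotoneOn
    intro t ht
    rw [interior_Ici] at ht
    have ht0 : (0:ℝ) ≤ t := le_trans hT0 ht.le
    rw [(hb t ht0).deriv]
    exact lt_of_lt_of_le (by positivity) (hbT t ht.le)
  -- eventually tseq n ≥ T
  have htseqT : ∀ᶠ n : ℕ in atTop, T ≤ tseq n := by
    obtain ⟨M', hM'⟩ := (isCompact_Icc (a := (0:ℝ)) (b := T)).bddAbove_image
      (hbc.mono Icc_subset_Ici_self)
    filter_upwards [eventually_gt_atTop ⌈M'⌉₊] with n hn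
    by_contra hcon
    push_neg at hcon
    have h1 : b (tseq n) ≤ M' := hM' (mem_image_of_mem b ⟨(htseq n).1, hcon.le⟩)
    rw [(htseq n).2] at h1
    have h2 : (M' : ℝ) < n := lt_of_le_of_lt (Nat.le_ceil M') (Nat.cast_lt.2 hn)
    linarith
  -- uniform convergence
  have hconv : ∀ s > 0, TendstoUniformlyOn (fun (n : ℕ) (τ : ℝ) => b (tseq n + τ) - n) binf
      Filter.atTop (Set.Icc 0 s) := by
    intro s hs
    rw [Metric.tendstoUniformlyOn_iff]
    intro ε' hε'
    set A : ℝ := gronwallBound 0 (C : ℝ) 1 s with hAdef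
    have hA : 0 < A := gronwall_pos C.2 hs
    set δ : ℝ := ε' / (2 * A) with hδdef
    have hδ : 0 < δ := by positivity
    have hev : ∀ᶠ x in atTop, |φ x| < δ := by
      have h := hφ0 (Metric.ball_mem_nhds 0 hδ)
      simpa [Real.dist_eq, Metric.mem_ball] using h
    obtain ⟨B, hB⟩ := eventually_atTop.1 hev
    filter_upwards [htseqT, eventually_ge_atTop ⌈B⌉₊] with n hnT hnB
    intro τ hτ
    -- b (tseq n + σ) ≥ n for σ ≥ 0
    have hblow : ∀ σ : ℝ, 0 ≤ σ → (n : ℝ) ≤ b (tseq n + σ) := by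
      intro σ hσ
      have := hmono (mem_Ici.2 hnT) (mem_Ici.2 (by linarith : T ≤ tseq n + σ))
        (by linarith : tseq n ≤ tseq n + σ)
      rwa [(htseq n).2] at this
    have hBn : B ≤ (n : ℝ) := Nat.ceil_le.1 hnB
    -- error function
    set f : ℝ → ℝ := fun σ => b (tseq n + σ) - n - binf σ with hfdef
    have hfd : ∀ σ ∈ Icc (0:ℝ) s, HasDerivAt f
        (Hfun (b (tseq n + σ)) + φ (b (tseq n + σ)) - Hfun (binf σ)) σ := by
      intro σ hσ
      have h0 : (0:ℝ) ≤ tseq n + σ := by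
        have := (htseq n).1; linarith [hσ.1]
      have h1 : HasDerivAt (fun σ : ℝ => b (tseq n + σ))
          ((Hfun (b (tseq n + σ)) + φ (b (tseq n + σ))) * 1) σ :=
        (hb (tseq n + σ) h0).comp σ ((hasDerivAt_id σ).const_add (tseq n))
      have h3 := (h1.sub_const (n : ℝ)).sub (hbinfd σ)
      rw [mul_one] at h3
      exact h3
    have hfc : ContinuousOn f (Icc 0 s) := fun σ hσ =>
      (hfd σ hσ).differentiableAt.continuousAt.continuousWithinAt
    have hf0 : ‖f 0‖ ≤ 0 := by
      simp [hfdef, hbinf0, (htseq n).2]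
    have hbound : ∀ σ ∈ Ico (0:ℝ) s,
        ‖Hfun (b (tseq n + σ)) + φ (b (tseq n + σ)) - Hfun (binf σ)‖ ≤
          (C : ℝ) * ‖f σ‖ + δ := by
      intro σ hσ
      have hper' : Hfun (b (tseq n + σ)) = Hfun (f σ + binf σ) := by
        have h := (hHper.nat_mul n) (b (tseq n + σ) - n)
        simp only [mul_one] at h
        have h2 : f σ + binf σ = b (tseq n + σ) - n := by rw [hfdef]; ring
        rw [h2, ← h]
        congr 1
        ring
      have hlip : |Hfun (b (tseq n + σ)) - Hfun (binf σ)| ≤ (C : ℝ) * |f σ| := by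
        rw [hper']
        have := hH.dist_le_mul (f σ + binf σ) (binf σ)
        rw [Real.dist_eq, Real.dist_eq] at this
        simpa using this
      have hφb : |φ (b (tseq n + σ))| ≤ δ := by
        apply le_of_lt
        apply hB
        exact le_trans hBn (hblow σ hσ.1)
      calc ‖Hfun (b (tseq n + σ)) + φ (b (tseq n + σ)) - Hfun (binf σ)‖
          = |(Hfun (b (tseq n + σ)) - Hfun (binf σ)) + φ (b (tseq n + σ))| := by
            rw [Real.norm_eq_abs]; ring_nf
        _ ≤ |Hfun (b (tseq n + σ)) - Hfun (binf σ)| + |φ (b (tseq n + σ))| := abs_add_le _ _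
        _ ≤ (C : ℝ) * |f σ| + δ := add_le_add hlip hφb
        _ = (C : ℝ) * ‖f σ‖ + δ := by rw [Real.norm_eq_abs]
    have hgron := norm_le_gronwallBound_of_norm_deriv_right_le hfc
      (fun σ hσ => (hfd σ (Ico_subset_Icc_self hσ)).hasDerivWithinAt) hf0 hbound τ hτ
    have h1 : ‖f τ‖ ≤ gronwallBound 0 (C : ℝ) δ s := by
      refine le_trans hgron ?_
      rw [sub_zero]
      exact gronwall_mono C.2 hδ.le hτ.1 hτ.2
    have h2 : gronwallBound 0 (C : ℝ) δ s = δ * A := gronwall_scale _ _ _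
    have h3 : δ * A < ε' := by
      rw [hδdef]; rw [div_mul_eq_mul_div]
      rw [div_lt_iff₀ (by positivity)]
      nlinarith
    have h4 : dist (binf τ) (b (tseq n + τ) - n) = ‖f τ‖ := by
      rw [Real.dist_eq, Real.norm_eq_abs, hfdef]
      exact abs_sub_comm _ _
    calc dist (binf τ) (b (tseq n + τ) - n) = ‖f τ‖ := h4
      _ ≤ gronwallBound 0 (C : ℝ) δ s := h1
      _ = δ * A := h2
      _ < ε' := h3
  exact ⟨binf, hbinf0, fun t _ => hbinfd t, hconv,
    G 1, ht₀pos, hbinft₀, fun τ _ => hper τ⟩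
end
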